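/- arXiv:2007.05945 — 10 statements merged into one kernel-verified Lean document; each statement's English description precedes it below -/
import Mathlib

section
/- Let ξ₀ > 0 be a root of the quintic polynomial P₅, and set x₀ = (a₀ + 4a₁ξ₀ + 6a₂ξ₀² + 4a₃ξ₀³ + a₄ξ₀⁴)^(−1/3) and y₀ = ξ₀x₀. Then (x₀,y₀) is a positive fixed point of the quartic operator Q, i.e. x₀>0, y₀>0 and Q(x₀,y₀)=(x₀,y₀). -/
theorem stmt_1 (a₀ a₁ a₂ a₃ a₄ b₀ b₁ b₂ b₃ b₄ : ℝ)
    (ha₀ : 0 < a₀) (ha₁ : 0 < a₁) (ha₂ : 0 < a₂) (ha₃ : 0 < a₃) (ha₄ : 0 < a₄)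
    (hb₀ : 0 < b₀) (hb₁ : 0 < b₁) (hb₂ : 0 < b₂) (hb₃ : 0 < b₃) (hb₄ : 0 < b₄)
    (Q : ℝ × ℝ → ℝ × ℝ)
    (hQ : ∀ x y : ℝ, Q (x, y) =
      (a₀ * x ^ 4 + 4 * a₁ * x ^ 3 * y + 6 * a₂ * x ^ 2 * y ^ 2 + 4 * a₃ * x * y ^ 3 + a₄ * y ^ 4,
       b₀ * x ^ 4 + 4 * b₁ * x ^ 3 * y + 6 * b₂ * x ^ 2 * y ^ 2 + 4 * b₃ * x * y ^ 3 + b₄ * y ^ 4))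
    (P₅ : ℝ → ℝ)
    (hP₅ : ∀ ξ : ℝ, P₅ ξ = a₄ * ξ ^ 5 + (4 * a₃ - b₄) * ξ ^ 4 + (6 * a₂ - 4 * b₃) * ξ ^ 3
      + (4 * a₁ - 6 * b₂) * ξ ^ 2 + (a₀ - 4 * b₁) * ξ - b₀)
    (ξ₀ : ℝ) (hξ₀ : 0 < ξ₀) (hroot : P₅ ξ₀ = 0)
    (x₀ y₀ : ℝ)
    (hx₀ : x₀ = (a₀ + 4 * a₁ * ξ₀ + 6 * a₂ * ξ₀ ^ 2 + 4 * a₃ * ξ₀ ^ 3 + a₄ * ξ₀ ^ 4) ^ (-(1 / 3) : ℝ))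
    (hy₀ : y₀ = ξ₀ * x₀) :
    0 < x₀ ∧ 0 < y₀ ∧ Q (x₀, y₀) = (x₀, y₀) := by
  set A : ℝ := a₀ + 4 * a₁ * ξ₀ + 6 * a₂ * ξ₀ ^ 2 + 4 * a₃ * ξ₀ ^ 3 + a₄ * ξ₀ ^ 4 with hA
  have hApos : 0 < A := by positivity
  have hxpos : 0 < x₀ := by rw [hx₀]; positivity
  have hypos : 0 < y₀ := by rw [hy₀]; positivity
  refine ⟨hxpos, hypos, ?_⟩
  have hkey : x₀ ^ 4 * A = x₀ := by
    rw [hx₀, ← Real.rpow_natCast (A ^ (-(1/3) : ℝ)) 4, ← Real.rpow_mul hApos.le]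
    nth_rewrite 2 [← Real.rpow_one A]
    rw [← Real.rpow_add hApos]
    norm_num
  have hB : ξ₀ * A = b₀ + 4 * b₁ * ξ₀ + 6 * b₂ * ξ₀ ^ 2 + 4 * b₃ * ξ₀ ^ 3 + b₄ * ξ₀ ^ 4 := by
    have := hroot
    rw [hP₅] at this
    nlinarith [this]
  rw [hQ, hy₀, Prod.mk.injEq]
  constructor
  · linear_combination hkey
  · linear_combination ξ₀ * hkey - x₀ ^ 4 * hB
end

section
/- The map (x,y) ↦ y/x is a bijection from the set of positive fixed points of the quartic operator Q onto the set of positive roots of the quintic polynomial P₅; in particular, the number of positive fixed points of Q equals the number of positive real roots of P₅. -/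
theorem stmt_2 (a₀ a₁ a₂ a₃ a₄ b₀ b₁ b₂ b₃ b₄ : ℝ)
    (ha₀ : 0 < a₀) (ha₁ : 0 < a₁) (ha₂ : 0 < a₂) (ha₃ : 0 < a₃) (ha₄ : 0 < a₄)
    (hb₀ : 0 < b₀) (hb₁ : 0 < b₁) (hb₂ : 0 < b₂) (hb₃ : 0 < b₃) (hb₄ : 0 < b₄)
    (Q : ℝ × ℝ → ℝ × ℝ)
    (hQ : ∀ x y : ℝ, Q (x, y) =
      (a₀ * x ^ 4 + 4 * a₁ * x ^ 3 * y + 6 * a₂ * x ^ 2 * y ^ 2 + 4 * a₃ * x * y ^ 3 + a₄ * y ^ 4,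
       b₀ * x ^ 4 + 4 * b₁ * x ^ 3 * y + 6 * b₂ * x ^ 2 * y ^ 2 + 4 * b₃ * x * y ^ 3 + b₄ * y ^ 4))
    (P₅ : ℝ → ℝ)
    (hP₅ : ∀ ξ : ℝ, P₅ ξ = a₄ * ξ ^ 5 + (4 * a₃ - b₄) * ξ ^ 4 + (6 * a₂ - 4 * b₃) * ξ ^ 3
      + (4 * a₁ - 6 * b₂) * ξ ^ 2 + (a₀ - 4 * b₁) * ξ - b₀) :
    Set.BijOn (fun p : ℝ × ℝ => p.2 / p.1)
      {p : ℝ × ℝ | 0 < p.1 ∧ 0 < p.2 ∧ Q p = p}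
      {ξ : ℝ | 0 < ξ ∧ P₅ ξ = 0} ∧
    ({p : ℝ × ℝ | 0 < p.1 ∧ 0 < p.2 ∧ Q p = p}).encard = ({ξ : ℝ | 0 < ξ ∧ P₅ ξ = 0}).encard := by
  set A : ℝ → ℝ → ℝ := fun x y =>
    a₀ * x ^ 4 + 4 * a₁ * x ^ 3 * y + 6 * a₂ * x ^ 2 * y ^ 2 + 4 * a₃ * x * y ^ 3 + a₄ * y ^ 4
    with hA
  set B : ℝ → ℝ → ℝ := fun x y =>
    b₀ * x ^ 4 + 4 * b₁ * x ^ 3 * y + 6 * b₂ * x ^ 2 * y ^ 2 + 4 * b₃ * x * y ^ 3 + b₄ * y ^ 4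
    with hB
  have hfix : ∀ x y : ℝ, Q (x, y) = (x, y) ↔ A x y = x ∧ B x y = y := by
    intro x y
    rw [hQ, Prod.ext_iff]
  have key : ∀ x y : ℝ, x ≠ 0 → x ^ 5 * P₅ (y / x) = y * A x y - x * B x y := by
    intro x y hx
    rw [hP₅]
    simp only [hA, hB]
    field_simp
    ring
  have hbij : Set.BijOn (fun p : ℝ × ℝ => p.2 / p.1)
      {p : ℝ × ℝ | 0 < p.1 ∧ 0 < p.2 ∧ Q p = p}
      {ξ : ℝ | 0 < ξ ∧ P₅ ξ = 0} := by
    constructor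
    · rintro ⟨x, y⟩ ⟨hx, hy, hfp⟩
      obtain ⟨hAx, hBy⟩ := (hfix x y).mp hfp
      refine ⟨div_pos hy hx, ?_⟩
      have h := key x y hx.ne'
      rw [hAx, hBy] at h
      have h5 : x ^ 5 ≠ 0 := pow_ne_zero _ hx.ne'
      have : x ^ 5 * P₅ (y / x) = 0 := by rw [h]; ring
      exact (mul_eq_zero.mp this).resolve_left h5
    constructor
    · rintro ⟨x₁, y₁⟩ ⟨hx₁, hy₁, hfp₁⟩ ⟨x₂, y₂⟩ ⟨hx₂, hy₂, hfp₂⟩ hξ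
      simp only at hξ
      obtain ⟨hAx₁, _⟩ := (hfix x₁ y₁).mp hfp₁
      obtain ⟨hAx₂, _⟩ := (hfix x₂ y₂).mp hfp₂
      set ξ := y₁ / x₁ with hξdef
      have hy₁' : y₁ = ξ * x₁ := by rw [hξdef, div_mul_cancel₀ y₁ (show x₁ ≠ 0 from hx₁.ne')]
      have hy₂' : y₂ = ξ * x₂ := by rw [hξ]; field_simp
      have hc : ∀ x : ℝ, A x (ξ * x) = x ^ 4 * A 1 ξ := by
        intro x; simp only [hA]; ring
      have h1 : x₁ ^ 4 * A 1 ξ = x₁ := by rw [← hc, ← hy₁', hAx₁]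
      have h2 : x₂ ^ 4 * A 1 ξ = x₂ := by rw [← hc, ← hy₂', hAx₂]
      have hcube : x₁ ^ 3 * A 1 ξ = 1 := by
        have h : x₁ * (x₁ ^ 3 * A 1 ξ) = x₁ * 1 := by rw [mul_one]; linear_combination h1
        exact mul_left_cancel₀ hx₁.ne' h
      have hcube2 : x₂ ^ 3 * A 1 ξ = 1 := by
        have h : x₂ * (x₂ ^ 3 * A 1 ξ) = x₂ * 1 := by rw [mul_one]; linear_combination h2
        exact mul_left_cancel₀ hx₂.ne' h
      have hAξ : A 1 ξ ≠ 0 := by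
        intro h; rw [h, mul_zero] at hcube; norm_num at hcube
      have hx3 : x₁ ^ 3 = x₂ ^ 3 := by
        have : x₁ ^ 3 * A 1 ξ = x₂ ^ 3 * A 1 ξ := by rw [hcube, hcube2]
        exact mul_right_cancel₀ hAξ this
      have hxx : x₁ = x₂ :=
        (pow_left_strictMonoOn₀ (n := 3) (by norm_num)).injOn hx₁.le hx₂.le hx3
      refine Prod.ext hxx ?_
      simp only
      rw [hy₁', hy₂', hxx]
    · rintro ξ ⟨hξ, hPξ⟩
      have hcpos : 0 < A 1 ξ := by
        simp only [hA]
        positivity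
      obtain ⟨x, hxpos, hx3⟩ : ∃ x : ℝ, 0 < x ∧ x ^ 3 * A 1 ξ = 1 := by
        refine ⟨(A 1 ξ)⁻¹ ^ ((1:ℝ)/3), Real.rpow_pos_of_pos (inv_pos.mpr hcpos) _, ?_⟩
        rw [← Real.rpow_natCast ((A 1 ξ)⁻¹ ^ ((1:ℝ)/3)) 3,
          ← Real.rpow_mul (inv_pos.mpr hcpos).le]
        norm_num
        exact inv_mul_cancel₀ hcpos.ne'
      have hAeq : A x (ξ * x) = x := by
        have hhom : A x (ξ * x) = x * (x ^ 3 * A 1 ξ) := by simp only [hA]; ring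
        rw [hhom, hx3, mul_one]
      have hdiv : (ξ * x) / x = ξ := by field_simp
      have hkey := key x (ξ * x) hxpos.ne'
      rw [hdiv, hPξ, mul_zero, hAeq] at hkey
      have hBeq : B x (ξ * x) = ξ * x := by
        have : x * B x (ξ * x) = x * (ξ * x) := by linarith [hkey]
        exact mul_left_cancel₀ hxpos.ne' this
      refine ⟨(x, ξ * x), ⟨hxpos, mul_pos hξ hxpos, ?_⟩, hdiv⟩
      exact (hfix x (ξ * x)).mpr ⟨hAeq, hBeq⟩
  exact ⟨hbij, by rw [← hbij.image_eq, hbij.injOn.encard_image]⟩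
end

section
/- The quartic operator Q has at least one positive fixed point, i.e. there exist x>0 and y>0 with Q(x,y)=(x,y). -/
set_option maxHeartbeats 1000000 in
theorem stmt_4 (a₀ a₁ a₂ a₃ a₄ b₀ b₁ b₂ b₃ b₄ : ℝ)
    (ha₀ : 0 < a₀) (ha₁ : 0 < a₁) (ha₂ : 0 < a₂) (ha₃ : 0 < a₃) (ha₄ : 0 < a₄)
    (hb₀ : 0 < b₀) (hb₁ : 0 < b₁) (hb₂ : 0 < b₂) (hb₃ : 0 < b₃) (hb₄ : 0 < b₄)
    (Q : ℝ × ℝ → ℝ × ℝ)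
    (hQ : ∀ x y : ℝ, Q (x, y) =
      (a₀ * x ^ 4 + 4 * a₁ * x ^ 3 * y + 6 * a₂ * x ^ 2 * y ^ 2 + 4 * a₃ * x * y ^ 3 + a₄ * y ^ 4,
       b₀ * x ^ 4 + 4 * b₁ * x ^ 3 * y + 6 * b₂ * x ^ 2 * y ^ 2 + 4 * b₃ * x * y ^ 3 + b₄ * y ^ 4)) :
    ∃ x y : ℝ, 0 < x ∧ 0 < y ∧ Q (x, y) = (x, y) := by
  set g : ℝ → ℝ := fun r =>
    (a₀ * r ^ 4 + 4 * a₁ * r ^ 3 + 6 * a₂ * r ^ 2 + 4 * a₃ * r + a₄) -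
      r * (b₀ * r ^ 4 + 4 * b₁ * r ^ 3 + 6 * b₂ * r ^ 2 + 4 * b₃ * r + b₄) with hg
  have hg0 : 0 < g 0 := by simp [hg]; linarith
  set S : ℝ := a₀ + 4 * a₁ + 6 * a₂ + 4 * a₃ + a₄ with hS
  set R : ℝ := S / b₀ + 1 with hR
  have hS0 : 0 < S := by positivity
  have hR1 : 1 ≤ R := by rw [hR]; nlinarith [div_pos hS0 hb₀]
  have hR0 : 0 < R := lt_of_lt_of_le one_pos hR1
  have hbR : S < b₀ * R := by
    rw [hR]; field_simp; nlinarith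
  have hR4 : (0:ℝ) < R ^ 4 := pow_pos hR0 4
  have h0 : (1:ℝ) ≤ R ^ 4 := one_le_pow₀ hR1
  have h1 : R ≤ R ^ 4 := by calc R = R ^ 1 := (pow_one R).symm
                                _ ≤ R ^ 4 := pow_le_pow_right₀ hR1 (by norm_num)
  have h2 : R ^ 2 ≤ R ^ 4 := pow_le_pow_right₀ hR1 (by norm_num)
  have h3 : R ^ 3 ≤ R ^ 4 := pow_le_pow_right₀ hR1 (by norm_num)
  have hgR : g R < 0 := by
    have hupper : a₀ * R ^ 4 + 4 * a₁ * R ^ 3 + 6 * a₂ * R ^ 2 + 4 * a₃ * R + a₄ ≤ S * R ^ 4 := by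
      rw [hS]
      nlinarith [mul_nonneg ha₁.le (sub_nonneg.2 h3), mul_nonneg ha₂.le (sub_nonneg.2 h2),
        mul_nonneg ha₃.le (sub_nonneg.2 h1), mul_nonneg ha₄.le (sub_nonneg.2 h0)]
    have hlower : S * R ^ 4 <
        R * (b₀ * R ^ 4 + 4 * b₁ * R ^ 3 + 6 * b₂ * R ^ 2 + 4 * b₃ * R + b₄) := by
      have h5 : b₀ * R * R ^ 4 ≤
          R * (b₀ * R ^ 4 + 4 * b₁ * R ^ 3 + 6 * b₂ * R ^ 2 + 4 * b₃ * R + b₄) := by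
        nlinarith [pow_pos hR0 3, pow_pos hR0 2, mul_pos hR0 hR0,
          mul_pos (mul_pos hb₁ hR0) (pow_pos hR0 3), mul_pos (mul_pos hb₂ hR0) (pow_pos hR0 2),
          mul_pos (mul_pos hb₃ hR0) (mul_pos hR0 hR0), mul_pos hb₄ hR0]
      calc S * R ^ 4 < b₀ * R * R ^ 4 := mul_lt_mul_of_pos_right hbR hR4
        _ ≤ _ := h5
    rw [hg]
    simp only
    linarith
  have hcont : Continuous g := by rw [hg]; fun_prop
  have hsub := intermediate_value_Icc' (le_trans zero_le_one hR1) hcont.continuousOn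
  obtain ⟨r, hrmem, hr0⟩ := hsub ⟨le_of_lt hgR, le_of_lt hg0⟩
  have hrpos : 0 < r := by
    rcases lt_or_eq_of_le hrmem.1 with h | h
    · exact h
    · exfalso; rw [← h] at hr0; rw [hr0] at hg0; exact lt_irrefl 0 hg0
  set L : ℝ := b₀ * r ^ 4 + 4 * b₁ * r ^ 3 + 6 * b₂ * r ^ 2 + 4 * b₃ * r + b₄ with hL
  have hLpos : 0 < L := by positivity
  have hA : a₀ * r ^ 4 + 4 * a₁ * r ^ 3 + 6 * a₂ * r ^ 2 + 4 * a₃ * r + a₄ = r * L := by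
    have := hr0; rw [hg] at this; simp only at this; rw [hL]; linarith [this]
  set s : ℝ := L ^ (-(1/3) : ℝ) with hs
  have hspos : 0 < s := Real.rpow_pos_of_pos hLpos _
  have hs3 : s ^ 3 * L = 1 := by
    rw [hs, ← Real.rpow_natCast (L ^ (-(1/3) : ℝ)) 3, ← Real.rpow_mul hLpos.le]
    norm_num
    rw [Real.rpow_neg_one]
    exact inv_mul_cancel₀ hLpos.ne'
  have hs4 : s ^ 4 * L = s := by
    have : s ^ 4 = s * s ^ 3 := by ring
    rw [this, mul_assoc, hs3, mul_one]
  refine ⟨s * r, s, mul_pos hspos hrpos, hspos, ?_⟩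
  rw [hQ]
  have e1 : a₀ * (s * r) ^ 4 + 4 * a₁ * (s * r) ^ 3 * s + 6 * a₂ * (s * r) ^ 2 * s ^ 2 +
      4 * a₃ * (s * r) * s ^ 3 + a₄ * s ^ 4 = s * r := by
    have : a₀ * (s * r) ^ 4 + 4 * a₁ * (s * r) ^ 3 * s + 6 * a₂ * (s * r) ^ 2 * s ^ 2 +
        4 * a₃ * (s * r) * s ^ 3 + a₄ * s ^ 4 =
        s ^ 4 * (a₀ * r ^ 4 + 4 * a₁ * r ^ 3 + 6 * a₂ * r ^ 2 + 4 * a₃ * r + a₄) := by ring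
    rw [this, hA]
    calc s ^ 4 * (r * L) = r * (s ^ 4 * L) := by ring
    _ = r * s := by rw [hs4]
    _ = s * r := by ring
  have e2 : b₀ * (s * r) ^ 4 + 4 * b₁ * (s * r) ^ 3 * s + 6 * b₂ * (s * r) ^ 2 * s ^ 2 +
      4 * b₃ * (s * r) * s ^ 3 + b₄ * s ^ 4 = s := by
    have : b₀ * (s * r) ^ 4 + 4 * b₁ * (s * r) ^ 3 * s + 6 * b₂ * (s * r) ^ 2 * s ^ 2 +
        4 * b₃ * (s * r) * s ^ 3 + b₄ * s ^ 4 = s ^ 4 * L := by rw [hL]; ring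
    rw [this, hs4]
  rw [e1, e2]
end

section
/- The quartic operator Q has at most five positive fixed points, i.e. the set {(x,y) ∈ ℝ² : x>0, y>0, Q(x,y)=(x,y)} has cardinality at most 5. -/
open Polynomial

theorem stmt_5 (a₀ a₁ a₂ a₃ a₄ b₀ b₁ b₂ b₃ b₄ : ℝ)
    (ha₀ : 0 < a₀) (ha₁ : 0 < a₁) (ha₂ : 0 < a₂) (ha₃ : 0 < a₃) (ha₄ : 0 < a₄)
    (hb₀ : 0 < b₀) (hb₁ : 0 < b₁) (hb₂ : 0 < b₂) (hb₃ : 0 < b₃) (hb₄ : 0 < b₄)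
    (Q : ℝ × ℝ → ℝ × ℝ)
    (hQ : ∀ x y : ℝ, Q (x, y) =
      (a₀ * x ^ 4 + 4 * a₁ * x ^ 3 * y + 6 * a₂ * x ^ 2 * y ^ 2 + 4 * a₃ * x * y ^ 3 + a₄ * y ^ 4,
       b₀ * x ^ 4 + 4 * b₁ * x ^ 3 * y + 6 * b₂ * x ^ 2 * y ^ 2 + 4 * b₃ * x * y ^ 3 + b₄ * y ^ 4)) :
    ({p : ℝ × ℝ | 0 < p.1 ∧ 0 < p.2 ∧ Q p = p}).encard ≤ 5 := by
  set S := {p : ℝ × ℝ | 0 < p.1 ∧ 0 < p.2 ∧ Q p = p} with hSdef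
  set P : ℝ[X] := C a₄ * X ^ 5 + C (4 * a₃ - b₄) * X ^ 4 + C (6 * a₂ - 4 * b₃) * X ^ 3 +
      C (4 * a₁ - 6 * b₂) * X ^ 2 + C (a₀ - 4 * b₁) * X + C (-b₀) with hPdef
  have h5 : P.coeff 5 = a₄ := by
    simp only [hPdef, coeff_add, coeff_C_mul, coeff_X_pow, coeff_C, coeff_X]
    norm_num
  have hPne : P ≠ 0 := by
    intro h
    rw [h, coeff_zero] at h5
    linarith
  have hdeg : P.natDegree ≤ 5 := by
    rw [hPdef]
    compute_degree
  -- clean fixed point equations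
  have heq : ∀ x y : ℝ, (x, y) ∈ S → 0 < x ∧ 0 < y ∧
      (a₀ * x ^ 4 + 4 * a₁ * x ^ 3 * y + 6 * a₂ * x ^ 2 * y ^ 2 +
        4 * a₃ * x * y ^ 3 + a₄ * y ^ 4 = x) ∧
      (b₀ * x ^ 4 + 4 * b₁ * x ^ 3 * y + 6 * b₂ * x ^ 2 * y ^ 2 +
        4 * b₃ * x * y ^ 3 + b₄ * y ^ 4 = y) := by
    intro x y hp
    obtain ⟨hx, hy, hfix⟩ := hp
    rw [hQ x y, Prod.mk.injEq] at hfix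
    exact ⟨hx, hy, hfix.1, hfix.2⟩
  -- every fixed point yields a root of P
  have hroot : ∀ p ∈ S, P.eval (p.2 / p.1) = 0 := by
    rintro ⟨x, y⟩ hp
    obtain ⟨hx, hy, h1, h2⟩ := heq x y hp
    simp only
    have hx5 : (x : ℝ) ^ 5 ≠ 0 := pow_ne_zero _ hx.ne'
    have key : P.eval (y / x) * x ^ 5 =
        y * (a₀ * x ^ 4 + 4 * a₁ * x ^ 3 * y + 6 * a₂ * x ^ 2 * y ^ 2 +
          4 * a₃ * x * y ^ 3 + a₄ * y ^ 4) -
        x * (b₀ * x ^ 4 + 4 * b₁ * x ^ 3 * y + 6 * b₂ * x ^ 2 * y ^ 2 +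
          4 * b₃ * x * y ^ 3 + b₄ * y ^ 4) := by
      simp only [hPdef, eval_add, eval_mul, eval_pow, eval_C, eval_X]
      field_simp
      ring
    rw [h1, h2] at key
    have : P.eval (y / x) * x ^ 5 = 0 := by rw [key]; ring
    exact (mul_eq_zero.mp this).resolve_right hx5
  -- injectivity of the ratio map
  have hinj : Set.InjOn (fun p : ℝ × ℝ => p.2 / p.1) S := by
    rintro ⟨x, y⟩ hp ⟨u, v⟩ hq ht
    obtain ⟨hx, hy, h1, _⟩ := heq x y hp
    obtain ⟨hu, hv, h3, _⟩ := heq u v hq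
    simp only at ht
    have hcross : y * u = v * x := (div_eq_div_iff hx.ne' hu.ne').mp ht
    have hkey : u ^ 4 * x = x ^ 4 * u := by
      linear_combination (-(u ^ 4)) * h1 + x ^ 4 * h3 +
        (4 * a₁ * x ^ 3 * u ^ 3 + 6 * a₂ * x ^ 2 * u ^ 2 * (y * u + v * x) +
         4 * a₃ * x * u * (y ^ 2 * u ^ 2 + y * u * v * x + v ^ 2 * x ^ 2) +
         a₄ * (y ^ 3 * u ^ 3 + y ^ 2 * u ^ 2 * v * x + y * u * v ^ 2 * x ^ 2 +
           v ^ 3 * x ^ 3)) * hcross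
    have hx3 : x ^ 3 = u ^ 3 := by
      have hcancel : (x * u) * x ^ 3 = (x * u) * u ^ 3 := by linear_combination -hkey
      exact mul_left_cancel₀ (mul_pos hx hu).ne' hcancel
    have hxu : x = u := (Odd.strictMono_pow (R := ℝ) (by decide : Odd 3)).injective hx3
    have hyv : y = v := by
      have : y * u = v * u := by rw [hcross, hxu]
      exact mul_right_cancel₀ hu.ne' this
    simp [hxu, hyv]
  -- conclude
  have himg : (fun p : ℝ × ℝ => p.2 / p.1) '' S ⊆ (P.roots.toFinset : Set ℝ) := by
    rintro t ⟨p, hp, rfl⟩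
    simp only [Multiset.mem_toFinset, Finset.mem_coe, mem_roots hPne]
    exact hroot p hp
  calc S.encard = ((fun p : ℝ × ℝ => p.2 / p.1) '' S).encard := (hinj.encard_image).symm
    _ ≤ (P.roots.toFinset : Set ℝ).encard := Set.encard_mono himg
    _ = (P.roots.toFinset.card : ℕ∞) := Set.encard_coe_eq_coe_finsetCard _
    _ ≤ 5 := by
        have h1 : P.roots.toFinset.card ≤ P.roots.card := P.roots.toFinset_card_le
        have h2 : P.roots.card ≤ P.natDegree := P.card_roots'
        have : P.roots.toFinset.card ≤ 5 := le_trans h1 (le_trans h2 hdeg)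
        exact_mod_cast this
end

section
/- There exist positive real numbers a₀,a₁,a₂,a₃,a₄ and b₀,b₁,b₂,b₃,b₄ such that the associated quartic operator Q has exactly five positive fixed points, i.e. the set {(x,y) ∈ ℝ² : x>0, y>0, Q(x,y)=(x,y)} has cardinality exactly 5. -/
noncomputable def xr (q : ℝ) : ℝ := (q⁻¹) ^ ((1:ℝ)/3)

lemma xr_pos {q : ℝ} (hq : 0 < q) : 0 < xr q :=
  Real.rpow_pos_of_pos (inv_pos.mpr hq) _

lemma xr_cube {q : ℝ} (hq : 0 < q) : (xr q)^3 * q = 1 := by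
  have h1 : (xr q)^3 = q⁻¹ := by
    rw [xr, ← Real.rpow_natCast ((q⁻¹) ^ ((1:ℝ)/3)) 3,
      ← Real.rpow_mul (le_of_lt (inv_pos.mpr hq))]
    norm_num
  rw [h1, inv_mul_cancel₀ hq.ne']

lemma xr_lt {q r : ℝ} (hq : 0 < q) (hlt : q < r) : xr r < xr q := by
  have hr : (0:ℝ) < r := hq.trans hlt
  apply Real.rpow_lt_rpow (by positivity)
  · exact inv_strictAnti₀ hq hlt
  · norm_num

lemma cube_inj {x c : ℝ} (hx : 0 < x) (hc : 0 < c) (h : x^3 = c^3) : x = c := by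
  have h1 : x ≤ c := by nlinarith [mul_pos hx hx, mul_pos hc hc, mul_pos hx hc]
  have h2 : c ≤ x := by nlinarith [mul_pos hx hx, mul_pos hc hc, mul_pos hx hc]
  linarith

lemma solve_aux {x y t q : ℝ} (hx : 0 < x) (hq : 0 < q)
    (hyt : y = t * x)
    (hq' : 278 + 4*t + 120*t^2 + 4*t^3 + t^4 = q)
    (e1 : 278*x^4 + 4*x^3*y + 120*x^2*y^2 + 4*x*y^3 + y^4 = x) :
    x = xr q ∧ y = t * xr q := by
  have h4 : x^4 * q = x := by
    subst hyt; rw [← hq']; linear_combination e1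
  have h3 : x^3 * q = 1 := by
    have hxx : x * (x^3 * q) = x * 1 := by linear_combination h4
    exact mul_left_cancel₀ hx.ne' hxx
  have hx3 : x^3 = (xr q)^3 := by
    have hc := xr_cube hq
    exact mul_right_cancel₀ hq.ne' (h3.trans hc.symm)
  have hxe : x = xr q := cube_inj hx (xr_pos hq) hx3
  exact ⟨hxe, by rw [hyt, hxe]⟩

theorem stmt_6 :
    ∃ a₀ a₁ a₂ a₃ a₄ b₀ b₁ b₂ b₃ b₄ : ℝ,
      0 < a₀ ∧ 0 < a₁ ∧ 0 < a₂ ∧ 0 < a₃ ∧ 0 < a₄ ∧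
      0 < b₀ ∧ 0 < b₁ ∧ 0 < b₂ ∧ 0 < b₃ ∧ 0 < b₄ ∧
      ({p : ℝ × ℝ | 0 < p.1 ∧ 0 < p.2 ∧
        (a₀ * p.1 ^ 4 + 4 * a₁ * p.1 ^ 3 * p.2 + 6 * a₂ * p.1 ^ 2 * p.2 ^ 2
          + 4 * a₃ * p.1 * p.2 ^ 3 + a₄ * p.2 ^ 4,
         b₀ * p.1 ^ 4 + 4 * b₁ * p.1 ^ 3 * p.2 + 6 * b₂ * p.1 ^ 2 * p.2 ^ 2
          + 4 * b₃ * p.1 * p.2 ^ 3 + b₄ * p.2 ^ 4) = p}).encard = 5 := by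
  refine ⟨278, 1, 20, 1, 1, 120, 1, 229/6, 35/4, 19, by norm_num, by norm_num,
    by norm_num, by norm_num, by norm_num, by norm_num, by norm_num, by norm_num,
    by norm_num, by norm_num, ?_⟩
  have hset : {p : ℝ × ℝ | 0 < p.1 ∧ 0 < p.2 ∧
        ((278:ℝ) * p.1 ^ 4 + 4 * 1 * p.1 ^ 3 * p.2 + 6 * 20 * p.1 ^ 2 * p.2 ^ 2
          + 4 * 1 * p.1 * p.2 ^ 3 + 1 * p.2 ^ 4,
         (120:ℝ) * p.1 ^ 4 + 4 * 1 * p.1 ^ 3 * p.2 + 6 * (229/6) * p.1 ^ 2 * p.2 ^ 2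
          + 4 * (35/4) * p.1 * p.2 ^ 3 + 19 * p.2 ^ 4) = p} =
      {(xr 407, 1 * xr 407), (xr 814, 2 * xr 814), (xr 1559, 3 * xr 1559),
       (xr 2726, 4 * xr 2726), (xr 4423, 5 * xr 4423)} := by
    ext ⟨x, y⟩
    simp only [Set.mem_setOf_eq, Set.mem_insert_iff, Set.mem_singleton_iff,
      Prod.mk.injEq]
    constructor
    · rintro ⟨hx, hy, e1, e2⟩
      have key : (y - x) * (y - 2*x) * (y - 3*x) * (y - 4*x) * (y - 5*x) = 0 := by
        linear_combination y * e1 - x * e2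
      have e1' : 278*x^4 + 4*x^3*y + 120*x^2*y^2 + 4*x*y^3 + y^4 = x := by
        linear_combination e1
      rcases mul_eq_zero.mp key with key | h5
      rcases mul_eq_zero.mp key with key | h4
      rcases mul_eq_zero.mp key with key | h3
      rcases mul_eq_zero.mp key with h1 | h2
      · exact Or.inl (solve_aux hx (by norm_num) (by linarith) (by norm_num) e1')
      · exact Or.inr (Or.inl (solve_aux hx (by norm_num) (by linarith) (by norm_num) e1'))
      · exact Or.inr (Or.inr (Or.inl (solve_aux hx (by norm_num) (by linarith) (by norm_num) e1')))
      · exact Or.inr (Or.inr (Or.inr (Or.inl (solve_aux hx (by norm_num) (by linarith) (by norm_num) e1'))))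
      · exact Or.inr (Or.inr (Or.inr (Or.inr (solve_aux hx (by norm_num) (by linarith) (by norm_num) e1'))))
    · have mem_aux : ∀ t q : ℝ, 0 < t → 0 < q →
          (278 + 4*t + 120*t^2 + 4*t^3 + t^4 = q) →
          (120 + 4*t + 229*t^2 + 35*t^3 + 19*t^4 = t*q) →
          x = xr q → y = t * xr q →
          (0 < x ∧ 0 < y ∧
            ((278:ℝ) * x ^ 4 + 4 * 1 * x ^ 3 * y + 6 * 20 * x ^ 2 * y ^ 2
              + 4 * 1 * x * y ^ 3 + 1 * y ^ 4 = x ∧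
             (120:ℝ) * x ^ 4 + 4 * 1 * x ^ 3 * y + 6 * (229/6) * x ^ 2 * y ^ 2
              + 4 * (35/4) * x * y ^ 3 + 19 * y ^ 4 = y)) := by
        intro t q ht hq hp hr hxe hye
        have hc := xr_cube hq
        have hxp := xr_pos hq
        subst hxe hye
        refine ⟨hxp, by positivity, ?_, ?_⟩
        · linear_combination (xr q)^4 * hp + (xr q) * hc
        · linear_combination (xr q)^4 * hr + t * (xr q) * hc
      rintro (⟨h1, h2⟩ | ⟨h1, h2⟩ | ⟨h1, h2⟩ | ⟨h1, h2⟩ | ⟨h1, h2⟩)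
      · exact mem_aux 1 407 (by norm_num) (by norm_num) (by norm_num) (by norm_num) h1 h2
      · exact mem_aux 2 814 (by norm_num) (by norm_num) (by norm_num) (by norm_num) h1 h2
      · exact mem_aux 3 1559 (by norm_num) (by norm_num) (by norm_num) (by norm_num) h1 h2
      · exact mem_aux 4 2726 (by norm_num) (by norm_num) (by norm_num) (by norm_num) h1 h2
      · exact mem_aux 5 4423 (by norm_num) (by norm_num) (by norm_num) (by norm_num) h1 h2
  rw [hset]
  have o54 : xr 4423 < xr 2726 := xr_lt (by norm_num) (by norm_num)
  have o43 : xr 2726 < xr 1559 := xr_lt (by norm_num) (by norm_num)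
  have o32 : xr 1559 < xr 814 := xr_lt (by norm_num) (by norm_num)
  have o21 : xr 814 < xr 407 := xr_lt (by norm_num) (by norm_num)
  have ne12 : xr 407 ≠ xr 814 := by linarith
  have ne13 : xr 407 ≠ xr 1559 := by linarith
  have ne14 : xr 407 ≠ xr 2726 := by linarith
  have ne15 : xr 407 ≠ xr 4423 := by linarith
  have ne23 : xr 814 ≠ xr 1559 := by linarith
  have ne24 : xr 814 ≠ xr 2726 := by linarith
  have ne25 : xr 814 ≠ xr 4423 := by linarith
  have ne34 : xr 1559 ≠ xr 2726 := by linarith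
  have ne35 : xr 1559 ≠ xr 4423 := by linarith
  have ne45 : xr 2726 ≠ xr 4423 := by linarith
  rw [Set.encard_insert_of_notMem (by simp [Prod.ext_iff, ne12, ne13, ne14, ne15]),
    Set.encard_insert_of_notMem (by simp [Prod.ext_iff, ne23, ne24, ne25]),
    Set.encard_insert_of_notMem (by simp [Prod.ext_iff, ne34, ne35]),
    Set.encard_insert_of_notMem (by simp [Prod.ext_iff, ne45]),
    Set.encard_singleton]
  rfl
end

section
/- Suppose the four critical points λ₁<λ₂<λ₃<λ₄ of P₅ are all positive, i.e. λ₁ > 0, and that P₅(λ₁) > 0 and P₅(λ₄) < 0. Then the quartic operator Q has at least three positive fixed points: there exist at least three distinct pairs (x,y) with x>0, y>0 and Q(x,y)=(x,y). -/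
theorem stmt_10 (a₀ a₁ a₂ a₃ a₄ b₀ b₁ b₂ b₃ b₄ : ℝ)
    (ha₀ : 0 < a₀) (ha₁ : 0 < a₁) (ha₂ : 0 < a₂) (ha₃ : 0 < a₃) (ha₄ : 0 < a₄)
    (hb₀ : 0 < b₀) (hb₁ : 0 < b₁) (hb₂ : 0 < b₂) (hb₃ : 0 < b₃) (hb₄ : 0 < b₄)
    (Q : ℝ × ℝ → ℝ × ℝ)
    (hQ : ∀ x y : ℝ, Q (x, y) =
      (a₀ * x ^ 4 + 4 * a₁ * x ^ 3 * y + 6 * a₂ * x ^ 2 * y ^ 2 + 4 * a₃ * x * y ^ 3 + a₄ * y ^ 4,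
       b₀ * x ^ 4 + 4 * b₁ * x ^ 3 * y + 6 * b₂ * x ^ 2 * y ^ 2 + 4 * b₃ * x * y ^ 3 + b₄ * y ^ 4))
    (P₅ : ℝ → ℝ)
    (hP₅ : ∀ ξ : ℝ, P₅ ξ = a₄ * ξ ^ 5 + (4 * a₃ - b₄) * ξ ^ 4 + (6 * a₂ - 4 * b₃) * ξ ^ 3
      + (4 * a₁ - 6 * b₂) * ξ ^ 2 + (a₀ - 4 * b₁) * ξ - b₀)
    (lam₁ lam₂ lam₃ lam₄ : ℝ) (h12 : lam₁ < lam₂) (h23 : lam₂ < lam₃) (h34 : lam₃ < lam₄)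
    (hcrit : ∀ ξ : ℝ, deriv P₅ ξ = 5 * a₄ * (ξ - lam₁) * (ξ - lam₂) * (ξ - lam₃) * (ξ - lam₄))
    (hpos : 0 < lam₁) (hval₁ : 0 < P₅ lam₁) (hval₄ : P₅ lam₄ < 0) :
    3 ≤ ({p : ℝ × ℝ | 0 < p.1 ∧ 0 < p.2 ∧ Q p = p}).encard := by
  have hP : P₅ = fun ξ => a₄ * ξ ^ 5 + (4 * a₃ - b₄) * ξ ^ 4 + (6 * a₂ - 4 * b₃) * ξ ^ 3
      + (4 * a₁ - 6 * b₂) * ξ ^ 2 + (a₀ - 4 * b₁) * ξ - b₀ := funext hP₅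
  have hdiff : Differentiable ℝ P₅ := by rw [hP]; fun_prop
  have hcont : Continuous P₅ := hdiff.continuous
  have hP0 : P₅ 0 < 0 := by rw [hP₅]; norm_num; linarith
  -- root 1 in (0, lam₁)
  obtain ⟨r₁, hr₁mem, hr₁⟩ := intermediate_value_Ioo hpos.le hcont.continuousOn
    (show (0:ℝ) ∈ Set.Ioo (P₅ 0) (P₅ lam₁) from ⟨hP0, hval₁⟩)
  -- root 2 in (lam₁, lam₄)
  obtain ⟨r₂, hr₂mem, hr₂⟩ := intermediate_value_Ioo' (by linarith : lam₁ ≤ lam₄)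
    hcont.continuousOn (show (0:ℝ) ∈ Set.Ioo (P₅ lam₄) (P₅ lam₁) from ⟨hval₄, hval₁⟩)
  -- P₅ is eventually positive : use g ξ = P₅ ξ - a₄ (ξ - lam₄)^5 monotone on [lam₄, ∞)
  set g : ℝ → ℝ := fun ξ => P₅ ξ - a₄ * (ξ - lam₄) ^ 5 with hg
  have h5 : ∀ ξ : ℝ, HasDerivAt (fun t => a₄ * (t - lam₄) ^ 5) (a₄ * (5 * (ξ - lam₄) ^ 4)) ξ := by
    intro ξ
    have h := (((hasDerivAt_id ξ).sub_const lam₄).pow 5).const_mul a₄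
    simpa using h
  have hgdiff : Differentiable ℝ g := by
    rw [hg]; exact hdiff.sub (fun ξ => (h5 ξ).differentiableAt)
  have hgderiv : ∀ ξ : ℝ, deriv g ξ =
      5 * a₄ * (ξ - lam₁) * (ξ - lam₂) * (ξ - lam₃) * (ξ - lam₄) - 5 * a₄ * (ξ - lam₄) ^ 4 := by
    intro ξ
    have h := ((hdiff ξ).hasDerivAt.sub (h5 ξ)).deriv
    rw [hg, show (fun ξ => P₅ ξ - a₄ * (ξ - lam₄) ^ 5) = (P₅ - fun t => a₄ * (t - lam₄) ^ 5) from rfl, h, hcrit]; ring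
  have hmono : MonotoneOn g (Set.Ici lam₄) := by
    apply monotoneOn_of_deriv_nonneg (convex_Ici _) hgdiff.continuous.continuousOn
      (fun ξ _ => (hgdiff ξ).differentiableWithinAt)
    intro ξ hξ
    rw [interior_Ici] at hξ
    have hξ' : lam₄ < ξ := hξ
    rw [hgderiv]
    have key : (ξ - lam₄) ^ 4 ≤ (ξ - lam₁) * (ξ - lam₂) * (ξ - lam₃) * (ξ - lam₄) := by
      have e : (ξ - lam₄) ^ 4 = (ξ - lam₄) * (ξ - lam₄) * (ξ - lam₄) * (ξ - lam₄) := by ring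
      rw [e]
      have k1 : 0 < ξ - lam₁ := by linarith
      have k2 : 0 < ξ - lam₂ := by linarith
      have k3 : 0 < ξ - lam₃ := by linarith
      have k4 : 0 < ξ - lam₄ := by linarith
      gcongr <;> nlinarith
    nlinarith [mul_le_mul_of_nonneg_left key (by positivity : (0:ℝ) ≤ 5 * a₄)]
  set T : ℝ := max 1 ((1 - P₅ lam₄) / a₄) with hT
  have hT1 : (1:ℝ) ≤ T := le_max_left _ _
  have hT2 : (1 - P₅ lam₄) / a₄ ≤ T := le_max_right _ _
  have hgle : g lam₄ ≤ g (lam₄ + T) :=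
    hmono (Set.self_mem_Ici) (by simp; linarith) (by linarith)
  have hbig : 0 < P₅ (lam₄ + T) := by
    have e1 : g lam₄ = P₅ lam₄ := by rw [hg]; simp
    have e2 : g (lam₄ + T) = P₅ (lam₄ + T) - a₄ * T ^ 5 := by rw [hg]; ring_nf
    have h₅ : T ≤ T ^ 5 := le_self_pow₀ hT1 (by norm_num)
    have h₆ : 1 - P₅ lam₄ ≤ a₄ * T := by
      rw [div_le_iff₀ ha₄] at hT2; linarith
    have h₇ : a₄ * T ≤ a₄ * T ^ 5 := by nlinarith
    rw [e1, e2] at hgle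
    linarith
  -- root 3 in (lam₄, lam₄ + T)
  obtain ⟨r₃, hr₃mem, hr₃⟩ := intermediate_value_Ioo (by linarith : lam₄ ≤ lam₄ + T)
    hcont.continuousOn (show (0:ℝ) ∈ Set.Ioo (P₅ lam₄) (P₅ (lam₄ + T)) from ⟨hval₄, hbig⟩)
  -- from each positive root of P₅ we get a positive fixed point with ratio equal to the root
  have key : ∀ r : ℝ, 0 < r → P₅ r = 0 →
      ∃ p : ℝ × ℝ, (0 < p.1 ∧ 0 < p.2 ∧ Q p = p) ∧ p.2 / p.1 = r := by
    intro r hr hroot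
    have hFr : (0:ℝ) < a₀ + 4 * a₁ * r + 6 * a₂ * r ^ 2 + 4 * a₃ * r ^ 3 + a₄ * r ^ 4 := by
      positivity
    set F : ℝ := a₀ + 4 * a₁ * r + 6 * a₂ * r ^ 2 + 4 * a₃ * r ^ 3 + a₄ * r ^ 4 with hF
    set x : ℝ := F⁻¹ ^ ((1:ℝ)/3) with hxd
    have hx : 0 < x := Real.rpow_pos_of_pos (inv_pos.2 hFr) _
    have hx3 : x ^ 3 = F⁻¹ := by
      rw [hxd, ← Real.rpow_natCast (F⁻¹ ^ ((1:ℝ)/3)) 3, ← Real.rpow_mul (inv_nonneg.2 hFr.le)]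
      norm_num
    have hx4 : x ^ 4 * F = x := by
      have : x ^ 4 * F = x * (x ^ 3 * F) := by ring
      rw [this, hx3, inv_mul_cancel₀ hFr.ne', mul_one]
    refine ⟨(x, r * x), ⟨hx, by positivity, ?_⟩, by
      rw [mul_div_assoc, div_self hx.ne', mul_one]⟩
    rw [hQ]
    have h1 : a₀ * x ^ 4 + 4 * a₁ * x ^ 3 * (r * x) + 6 * a₂ * x ^ 2 * (r * x) ^ 2
        + 4 * a₃ * x * (r * x) ^ 3 + a₄ * (r * x) ^ 4 = x ^ 4 * F := by rw [hF]; ring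
    have hGr : b₀ + 4 * b₁ * r + 6 * b₂ * r ^ 2 + 4 * b₃ * r ^ 3 + b₄ * r ^ 4 = r * F := by
      have h := hP₅ r
      rw [hroot] at h
      rw [hF]
      linear_combination h
    have h2 : b₀ * x ^ 4 + 4 * b₁ * x ^ 3 * (r * x) + 6 * b₂ * x ^ 2 * (r * x) ^ 2
        + 4 * b₃ * x * (r * x) ^ 3 + b₄ * (r * x) ^ 4
        = x ^ 4 * (b₀ + 4 * b₁ * r + 6 * b₂ * r ^ 2 + 4 * b₃ * r ^ 3 + b₄ * r ^ 4) := by ring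
    rw [Prod.mk.injEq]
    constructor
    · rw [h1, hx4]
    · rw [h2, hGr]
      linear_combination r * hx4
  obtain ⟨p₁, hp₁, hq₁⟩ := key r₁ hr₁mem.1 hr₁
  obtain ⟨p₂, hp₂, hq₂⟩ := key r₂ (by linarith [hr₂mem.1] : 0 < r₂) hr₂
  obtain ⟨p₃, hp₃, hq₃⟩ := key r₃ (by linarith [hr₃mem.1] : 0 < r₃) hr₃
  have hlt12 : r₁ < r₂ := lt_trans hr₁mem.2 hr₂mem.1
  have hlt23 : r₂ < r₃ := lt_trans hr₂mem.2 hr₃mem.1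
  have hne12 : p₁ ≠ p₂ := by
    intro h; rw [← hq₁, ← hq₂, h] at hlt12; exact lt_irrefl _ hlt12
  have hne13 : p₁ ≠ p₃ := by
    intro h
    have : r₁ < r₃ := lt_trans hlt12 hlt23
    rw [← hq₁, ← hq₃, h] at this; exact lt_irrefl _ this
  have hne23 : p₂ ≠ p₃ := by
    intro h; rw [← hq₂, ← hq₃, h] at hlt23; exact lt_irrefl _ hlt23
  have hsub : ({p₁, p₂, p₃} : Set (ℝ × ℝ)) ⊆ {p : ℝ × ℝ | 0 < p.1 ∧ 0 < p.2 ∧ Q p = p} := by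
    intro p hp
    rcases hp with h | h | h <;> subst h <;> assumption
  have hcard : ({p₁, p₂, p₃} : Set (ℝ × ℝ)).encard = 3 := by
    rw [Set.encard_insert_of_notMem (by simp [hne12, hne13]),
      Set.encard_pair hne23]
    rfl
  calc (3 : ℕ∞) = ({p₁, p₂, p₃} : Set (ℝ × ℝ)).encard := hcard.symm
    _ ≤ _ := Set.encard_le_encard hsub
end

section
/- Suppose the four critical points λ₁<λ₂<λ₃<λ₄ of P₅ are all positive, i.e. λ₁ > 0, and that P₅(λ₁) < 0 and P₅(λ₃) < 0. Then the quartic operator Q has exactly one positive fixed point: the set {(x,y) ∈ ℝ² : x>0, y>0, Q(x,y)=(x,y)} has cardinality exactly 1. -/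
theorem stmt_11 (a₀ a₁ a₂ a₃ a₄ b₀ b₁ b₂ b₃ b₄ : ℝ)
    (ha₀ : 0 < a₀) (ha₁ : 0 < a₁) (ha₂ : 0 < a₂) (ha₃ : 0 < a₃) (ha₄ : 0 < a₄)
    (hb₀ : 0 < b₀) (hb₁ : 0 < b₁) (hb₂ : 0 < b₂) (hb₃ : 0 < b₃) (hb₄ : 0 < b₄)
    (Q : ℝ × ℝ → ℝ × ℝ)
    (hQ : ∀ x y : ℝ, Q (x, y) =
      (a₀ * x ^ 4 + 4 * a₁ * x ^ 3 * y + 6 * a₂ * x ^ 2 * y ^ 2 + 4 * a₃ * x * y ^ 3 + a₄ * y ^ 4,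
       b₀ * x ^ 4 + 4 * b₁ * x ^ 3 * y + 6 * b₂ * x ^ 2 * y ^ 2 + 4 * b₃ * x * y ^ 3 + b₄ * y ^ 4))
    (P₅ : ℝ → ℝ)
    (hP₅ : ∀ ξ : ℝ, P₅ ξ = a₄ * ξ ^ 5 + (4 * a₃ - b₄) * ξ ^ 4 + (6 * a₂ - 4 * b₃) * ξ ^ 3
      + (4 * a₁ - 6 * b₂) * ξ ^ 2 + (a₀ - 4 * b₁) * ξ - b₀)
    (lam₁ lam₂ lam₃ lam₄ : ℝ) (h12 : lam₁ < lam₂) (h23 : lam₂ < lam₃) (h34 : lam₃ < lam₄)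
    (hcrit : ∀ ξ : ℝ, deriv P₅ ξ = 5 * a₄ * (ξ - lam₁) * (ξ - lam₂) * (ξ - lam₃) * (ξ - lam₄))
    (hpos : 0 < lam₁) (hval₁ : P₅ lam₁ < 0) (hval₃ : P₅ lam₃ < 0) :
    ({p : ℝ × ℝ | 0 < p.1 ∧ 0 < p.2 ∧ Q p = p}).encard = 1 := by
  have hPe : P₅ = fun ξ : ℝ => a₄ * ξ ^ 5 + (4 * a₃ - b₄) * ξ ^ 4 + (6 * a₂ - 4 * b₃) * ξ ^ 3
      + (4 * a₁ - 6 * b₂) * ξ ^ 2 + (a₀ - 4 * b₁) * ξ - b₀ := funext hP₅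
  have hcont : Continuous P₅ := by rw [hPe]; fun_prop
  have hdiff : Differentiable ℝ P₅ := by rw [hPe]; fun_prop
  have h5a : (0:ℝ) < 5 * a₄ := by positivity
  -- monotonicity pieces
  have hm1 : StrictMonoOn P₅ (Set.Iic lam₁) := by
    apply strictMonoOn_of_deriv_pos (convex_Iic _) hcont.continuousOn
    intro x hx
    rw [interior_Iic, Set.mem_Iio] at hx
    rw [hcrit]
    have h1 : x - lam₁ < 0 := by linarith
    have h2 : x - lam₂ < 0 := by linarith
    have h3 : x - lam₃ < 0 := by linarith
    have h4 : x - lam₄ < 0 := by linarith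
    exact mul_pos_of_neg_of_neg
      (mul_neg_of_pos_of_neg (mul_pos_of_neg_of_neg (mul_neg_of_pos_of_neg h5a h1) h2) h3) h4
  have ha12 : StrictAntiOn P₅ (Set.Icc lam₁ lam₂) := by
    apply strictAntiOn_of_deriv_neg (convex_Icc _ _) hcont.continuousOn
    intro x hx
    rw [interior_Icc] at hx
    obtain ⟨hxa, hxb⟩ := hx
    rw [hcrit]
    have h1 : 0 < x - lam₁ := by linarith
    have h2 : x - lam₂ < 0 := by linarith
    have h3 : x - lam₃ < 0 := by linarith
    have h4 : x - lam₄ < 0 := by linarith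
    exact mul_neg_of_pos_of_neg
      (mul_pos_of_neg_of_neg (mul_neg_of_pos_of_neg (mul_pos h5a h1) h2) h3) h4
  have hm23 : StrictMonoOn P₅ (Set.Icc lam₂ lam₃) := by
    apply strictMonoOn_of_deriv_pos (convex_Icc _ _) hcont.continuousOn
    intro x hx
    rw [interior_Icc] at hx
    obtain ⟨hxa, hxb⟩ := hx
    rw [hcrit]
    have h1 : 0 < x - lam₁ := by linarith
    have h2 : 0 < x - lam₂ := by linarith
    have h3 : x - lam₃ < 0 := by linarith
    have h4 : x - lam₄ < 0 := by linarith
    exact mul_pos_of_neg_of_neg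
      (mul_neg_of_pos_of_neg (mul_pos (mul_pos h5a h1) h2) h3) h4
  have ha34 : StrictAntiOn P₅ (Set.Icc lam₃ lam₄) := by
    apply strictAntiOn_of_deriv_neg (convex_Icc _ _) hcont.continuousOn
    intro x hx
    rw [interior_Icc] at hx
    obtain ⟨hxa, hxb⟩ := hx
    rw [hcrit]
    have h1 : 0 < x - lam₁ := by linarith
    have h2 : 0 < x - lam₂ := by linarith
    have h3 : 0 < x - lam₃ := by linarith
    have h4 : x - lam₄ < 0 := by linarith
    exact mul_neg_of_pos_of_neg (mul_pos (mul_pos (mul_pos h5a h1) h2) h3) h4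
  have hm4 : StrictMonoOn P₅ (Set.Ici lam₄) := by
    apply strictMonoOn_of_deriv_pos (convex_Ici _) hcont.continuousOn
    intro x hx
    rw [interior_Ici, Set.mem_Ioi] at hx
    rw [hcrit]
    have h1 : 0 < x - lam₁ := by linarith
    have h2 : 0 < x - lam₂ := by linarith
    have h3 : 0 < x - lam₃ := by linarith
    have h4 : 0 < x - lam₄ := by linarith
    exact mul_pos (mul_pos (mul_pos (mul_pos h5a h1) h2) h3) h4
  have hval₄ : P₅ lam₄ < 0 :=
    lt_trans (ha34 (Set.left_mem_Icc.2 h34.le) (Set.right_mem_Icc.2 h34.le) h34) hval₃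
  -- growth estimate beyond lam₄ + 1
  have hder : ∀ x ∈ interior (Set.Ici (lam₄ + 1)), 5 * a₄ ≤ deriv P₅ x := by
    intro x hx
    rw [interior_Ici, Set.mem_Ioi] at hx
    rw [hcrit]
    have p1 : (1:ℝ) ≤ x - lam₁ := by linarith
    have p2 : (1:ℝ) ≤ x - lam₂ := by linarith
    have p3 : (1:ℝ) ≤ x - lam₃ := by linarith
    have p4 : (1:ℝ) ≤ x - lam₄ := by linarith
    calc (5 * a₄ : ℝ) = 5 * a₄ * 1 * 1 * 1 * 1 := by ring
      _ ≤ 5 * a₄ * (x - lam₁) * (x - lam₂) * (x - lam₃) * (x - lam₄) := by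
          gcongr <;> first | positivity | nlinarith
  have hgrow : ∀ u v : ℝ, lam₄ + 1 ≤ u → u ≤ v → 5 * a₄ * (v - u) ≤ P₅ v - P₅ u :=
    fun u v hu huv =>
      (convex_Ici (lam₄ + 1)).mul_sub_le_image_sub_of_le_deriv hcont.continuousOn
        hdiff.differentiableOn hder u (Set.mem_Ici.2 hu) v (Set.mem_Ici.2 (hu.trans huv)) huv
  -- find b ≥ lam₄ with P₅ b > 0
  obtain ⟨b, hb1, hPb⟩ : ∃ b : ℝ, lam₄ + 1 ≤ b ∧ 0 < P₅ b := by
    refine ⟨lam₄ + 1 + (1 + |P₅ (lam₄ + 1)|) / (5 * a₄),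
      le_add_of_nonneg_right (by positivity), ?_⟩
    have h := hgrow (lam₄ + 1) (lam₄ + 1 + (1 + |P₅ (lam₄ + 1)|) / (5 * a₄)) le_rfl
      (le_add_of_nonneg_right (by positivity))
    have heq : 5 * a₄ * ((lam₄ + 1 + (1 + |P₅ (lam₄ + 1)|) / (5 * a₄)) - (lam₄ + 1))
        = 1 + |P₅ (lam₄ + 1)| := by field_simp; ring
    rw [heq] at h
    have h2 := neg_abs_le (P₅ (lam₄ + 1))
    linarith
  have hlam4b : lam₄ ≤ b := by linarith
  -- the root
  obtain ⟨ζ, hζmem, hζ0⟩ : ∃ ζ ∈ Set.Icc lam₄ b, P₅ ζ = 0 := by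
    have h0 : (0:ℝ) ∈ Set.Icc (P₅ lam₄) (P₅ b) := ⟨hval₄.le, hPb.le⟩
    obtain ⟨ζ, hm, he⟩ := intermediate_value_Icc hlam4b hcont.continuousOn h0
    exact ⟨ζ, hm, he⟩
  have hζgt : lam₄ < ζ := by
    rcases lt_or_eq_of_le hζmem.1 with h | h
    · exact h
    · exfalso; rw [← h] at hζ0; linarith
  have hζpos : 0 < ζ := by linarith
  -- uniqueness of root
  have huniq : ∀ t : ℝ, P₅ t = 0 → t = ζ := by
    intro t ht
    rcases le_or_gt t lam₁ with h | h
    · exfalso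
      have := hm1.monotoneOn (Set.mem_Iic.2 h) (Set.mem_Iic.2 le_rfl) h
      linarith
    rcases le_or_gt t lam₂ with h2 | h2
    · exfalso
      have := ha12.antitoneOn (Set.left_mem_Icc.2 h12.le) ⟨h.le, h2⟩ h.le
      linarith
    rcases le_or_gt t lam₃ with h3 | h3
    · exfalso
      have := hm23.monotoneOn ⟨h2.le, h3⟩ (Set.right_mem_Icc.2 h23.le) h3
      linarith
    rcases le_or_gt t lam₄ with h4 | h4
    · exfalso
      have := ha34.antitoneOn (Set.left_mem_Icc.2 h34.le) ⟨h3.le, h4⟩ h3.le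
      linarith
    · exact hm4.injOn (Set.mem_Ici.2 h4.le) (Set.mem_Ici.2 hζgt.le) (by rw [ht, hζ0])
  -- c = C(ζ) and the fixed-point coordinates
  obtain ⟨c, hcdef⟩ : ∃ c : ℝ, c = a₀ + 4 * a₁ * ζ + 6 * a₂ * ζ ^ 2 + 4 * a₃ * ζ ^ 3 + a₄ * ζ ^ 4 :=
    ⟨_, rfl⟩
  have hc0 : 0 < c := by
    rw [hcdef]
    have h1 : 0 < a₁ * ζ := mul_pos ha₁ hζpos
    have h2 : 0 < a₂ * ζ ^ 2 := mul_pos ha₂ (pow_pos hζpos 2)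
    have h3 : 0 < a₃ * ζ ^ 3 := mul_pos ha₃ (pow_pos hζpos 3)
    have h4 : 0 < a₄ * ζ ^ 4 := mul_pos ha₄ (pow_pos hζpos 4)
    linarith
  obtain ⟨x₀, hx₀pos, hc1⟩ : ∃ x₀ : ℝ, 0 < x₀ ∧ x₀ ^ 3 * c = 1 := by
    refine ⟨c⁻¹ ^ ((3:ℝ)⁻¹), Real.rpow_pos_of_pos (inv_pos.2 hc0) _, ?_⟩
    have h3 : (c⁻¹ ^ ((3:ℝ)⁻¹)) ^ (3:ℕ) = c⁻¹ := by
      rw [← Real.rpow_natCast (c⁻¹ ^ ((3:ℝ)⁻¹)) 3, ← Real.rpow_mul (inv_pos.2 hc0).le]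
      norm_num
    rw [h3]
    exact inv_mul_cancel₀ hc0.ne'
  have hr : a₄ * ζ ^ 5 + (4 * a₃ - b₄) * ζ ^ 4 + (6 * a₂ - 4 * b₃) * ζ ^ 3
      + (4 * a₁ - 6 * b₂) * ζ ^ 2 + (a₀ - 4 * b₁) * ζ - b₀ = 0 := by
    rw [← hP₅]; exact hζ0
  have hc1' : x₀ ^ 3 * (a₀ + 4 * a₁ * ζ + 6 * a₂ * ζ ^ 2 + 4 * a₃ * ζ ^ 3 + a₄ * ζ ^ 4) = 1 := by
    rw [← hcdef]; exact hc1
  have comp1 : a₀ * x₀ ^ 4 + 4 * a₁ * x₀ ^ 3 * (ζ * x₀) + 6 * a₂ * x₀ ^ 2 * (ζ * x₀) ^ 2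
      + 4 * a₃ * x₀ * (ζ * x₀) ^ 3 + a₄ * (ζ * x₀) ^ 4 = x₀ := by
    linear_combination x₀ * hc1'
  have comp2 : b₀ * x₀ ^ 4 + 4 * b₁ * x₀ ^ 3 * (ζ * x₀) + 6 * b₂ * x₀ ^ 2 * (ζ * x₀) ^ 2
      + 4 * b₃ * x₀ * (ζ * x₀) ^ 3 + b₄ * (ζ * x₀) ^ 4 = ζ * x₀ := by
    linear_combination ζ * x₀ * hc1' - x₀ ^ 4 * hr
  rw [Set.encard_eq_one]
  refine ⟨(x₀, ζ * x₀), ?_⟩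
  ext ⟨x, y⟩
  simp only [Set.mem_setOf_eq, Set.mem_singleton_iff, Prod.mk.injEq]
  constructor
  · rintro ⟨hx, hy, hfix⟩
    rw [hQ x y] at hfix
    have e1 : a₀ * x ^ 4 + 4 * a₁ * x ^ 3 * y + 6 * a₂ * x ^ 2 * y ^ 2 + 4 * a₃ * x * y ^ 3
        + a₄ * y ^ 4 = x := congrArg Prod.fst hfix
    have e2 : b₀ * x ^ 4 + 4 * b₁ * x ^ 3 * y + 6 * b₂ * x ^ 2 * y ^ 2 + 4 * b₃ * x * y ^ 3
        + b₄ * y ^ 4 = y := congrArg Prod.snd hfix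
    have hxne : x ≠ 0 := hx.ne'
    have expand : P₅ (y / x) = (a₄ * y ^ 5 + (4 * a₃ - b₄) * y ^ 4 * x
        + (6 * a₂ - 4 * b₃) * y ^ 3 * x ^ 2 + (4 * a₁ - 6 * b₂) * y ^ 2 * x ^ 3
        + (a₀ - 4 * b₁) * y * x ^ 4 - b₀ * x ^ 5) / x ^ 5 := by
      rw [hP₅]
      field_simp
    have num0 : a₄ * y ^ 5 + (4 * a₃ - b₄) * y ^ 4 * x
        + (6 * a₂ - 4 * b₃) * y ^ 3 * x ^ 2 + (4 * a₁ - 6 * b₂) * y ^ 2 * x ^ 3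
        + (a₀ - 4 * b₁) * y * x ^ 4 - b₀ * x ^ 5 = 0 := by
      linear_combination y * e1 - x * e2
    have hroot : P₅ (y / x) = 0 := by rw [expand, num0, zero_div]
    have hζ' : y / x = ζ := huniq _ hroot
    have hyx : y = ζ * x := by
      rw [div_eq_iff hxne] at hζ'
      linarith
    have e1' : a₀ * x ^ 4 + 4 * a₁ * x ^ 3 * (ζ * x) + 6 * a₂ * x ^ 2 * (ζ * x) ^ 2
        + 4 * a₃ * x * (ζ * x) ^ 3 + a₄ * (ζ * x) ^ 4 = x := by rw [← hyx]; exact e1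
    have hx4 : x ^ 4 * (a₀ + 4 * a₁ * ζ + 6 * a₂ * ζ ^ 2 + 4 * a₃ * ζ ^ 3 + a₄ * ζ ^ 4) = x := by
      linear_combination e1'
    have hcx : x ^ 3 * c = 1 := by
      rw [hcdef]
      refine mul_left_cancel₀ hxne ?_
      rw [mul_one]
      linear_combination hx4
    have hx30 : x ^ 3 = x₀ ^ 3 :=
      mul_right_cancel₀ hc0.ne' (by rw [hcx, hc1])
    have hxx₀ : x = x₀ :=
      (pow_left_strictMonoOn₀ three_ne_zero).injOn hx.le hx₀pos.le hx30
    exact ⟨hxx₀, by rw [hyx, hxx₀]⟩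
  · rintro ⟨rfl, rfl⟩
    exact ⟨hx₀pos, mul_pos hζpos hx₀pos, by rw [hQ, comp1, comp2]⟩
end

section
/- Suppose the four critical points λ₁<λ₂<λ₃<λ₄ of P₅ are all positive, i.e. λ₁ > 0, and that P₅(λ₁) = 0 and P₅(λ₄) = 0. Then the quartic operator Q has exactly three positive fixed points: the set {(x,y) ∈ ℝ² : x>0, y>0, Q(x,y)=(x,y)} has cardinality exactly 3. -/
theorem stmt_14 (a₀ a₁ a₂ a₃ a₄ b₀ b₁ b₂ b₃ b₄ : ℝ)
    (ha₀ : 0 < a₀) (ha₁ : 0 < a₁) (ha₂ : 0 < a₂) (ha₃ : 0 < a₃) (ha₄ : 0 < a₄)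
    (hb₀ : 0 < b₀) (hb₁ : 0 < b₁) (hb₂ : 0 < b₂) (hb₃ : 0 < b₃) (hb₄ : 0 < b₄)
    (Q : ℝ × ℝ → ℝ × ℝ)
    (hQ : ∀ x y : ℝ, Q (x, y) =
      (a₀ * x ^ 4 + 4 * a₁ * x ^ 3 * y + 6 * a₂ * x ^ 2 * y ^ 2 + 4 * a₃ * x * y ^ 3 + a₄ * y ^ 4,
       b₀ * x ^ 4 + 4 * b₁ * x ^ 3 * y + 6 * b₂ * x ^ 2 * y ^ 2 + 4 * b₃ * x * y ^ 3 + b₄ * y ^ 4))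
    (P₅ : ℝ → ℝ)
    (hP₅ : ∀ ξ : ℝ, P₅ ξ = a₄ * ξ ^ 5 + (4 * a₃ - b₄) * ξ ^ 4 + (6 * a₂ - 4 * b₃) * ξ ^ 3
      + (4 * a₁ - 6 * b₂) * ξ ^ 2 + (a₀ - 4 * b₁) * ξ - b₀)
    (lam₁ lam₂ lam₃ lam₄ : ℝ) (h12 : lam₁ < lam₂) (h23 : lam₂ < lam₃) (h34 : lam₃ < lam₄)
    (hcrit : ∀ ξ : ℝ, deriv P₅ ξ = 5 * a₄ * (ξ - lam₁) * (ξ - lam₂) * (ξ - lam₃) * (ξ - lam₄))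
    (hpos : 0 < lam₁) (hval₁ : P₅ lam₁ = 0) (hval₄ : P₅ lam₄ = 0) :
    ({p : ℝ × ℝ | 0 < p.1 ∧ 0 < p.2 ∧ Q p = p}).encard = 3 := by
  classical
  have hPfun : P₅ = fun ξ => a₄ * ξ ^ 5 + (4 * a₃ - b₄) * ξ ^ 4 + (6 * a₂ - 4 * b₃) * ξ ^ 3
      + (4 * a₁ - 6 * b₂) * ξ ^ 2 + (a₀ - 4 * b₁) * ξ - b₀ := funext hP₅
  have hcont : Continuous P₅ := by rw [hPfun]; fun_prop
  have hx5 : (0:ℝ) < 5 * a₄ := by linarith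
  -- monotonicity pieces
  have mono1 : StrictMonoOn P₅ (Set.Iic lam₁) := by
    apply strictMonoOn_of_deriv_pos (convex_Iic _) hcont.continuousOn
    intro ξ hξ
    rw [interior_Iic] at hξ
    have h1 : ξ < lam₁ := hξ
    have h2 : ξ < lam₂ := lt_trans h1 h12
    have h3 : ξ < lam₃ := lt_trans h2 h23
    have h4 : ξ < lam₄ := lt_trans h3 h34
    have p := mul_pos (mul_pos (mul_pos (sub_pos.2 h1) (sub_pos.2 h2)) (sub_pos.2 h3))
      (sub_pos.2 h4)
    rw [hcrit]
    nlinarith [mul_pos hx5 p]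
  have anti12 : StrictAntiOn P₅ (Set.Icc lam₁ lam₂) := by
    apply strictAntiOn_of_deriv_neg (convex_Icc _ _) hcont.continuousOn
    intro ξ hξ
    rw [interior_Icc] at hξ
    obtain ⟨h1, h2⟩ := hξ
    have h3 : ξ < lam₃ := lt_trans h2 h23
    have h4 : ξ < lam₄ := lt_trans h3 h34
    have p := mul_pos (mul_pos (mul_pos (sub_pos.2 h1) (sub_pos.2 h2)) (sub_pos.2 h3))
      (sub_pos.2 h4)
    rw [hcrit]
    nlinarith [mul_pos hx5 p]
  have mono23 : StrictMonoOn P₅ (Set.Icc lam₂ lam₃) := by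
    apply strictMonoOn_of_deriv_pos (convex_Icc _ _) hcont.continuousOn
    intro ξ hξ
    rw [interior_Icc] at hξ
    obtain ⟨h2, h3⟩ := hξ
    have h1 : lam₁ < ξ := lt_trans h12 h2
    have h4 : ξ < lam₄ := lt_trans h3 h34
    have p := mul_pos (mul_pos (mul_pos (sub_pos.2 h1) (sub_pos.2 h2)) (sub_pos.2 h3))
      (sub_pos.2 h4)
    rw [hcrit]
    nlinarith [mul_pos hx5 p]
  have anti34 : StrictAntiOn P₅ (Set.Icc lam₃ lam₄) := by
    apply strictAntiOn_of_deriv_neg (convex_Icc _ _) hcont.continuousOn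
    intro ξ hξ
    rw [interior_Icc] at hξ
    obtain ⟨h3, h4⟩ := hξ
    have h2 : lam₂ < ξ := lt_trans h23 h3
    have h1 : lam₁ < ξ := lt_trans h12 h2
    have p := mul_pos (mul_pos (mul_pos (sub_pos.2 h1) (sub_pos.2 h2)) (sub_pos.2 h3))
      (sub_pos.2 h4)
    rw [hcrit]
    nlinarith [mul_pos hx5 p]
  have mono4 : StrictMonoOn P₅ (Set.Ici lam₄) := by
    apply strictMonoOn_of_deriv_pos (convex_Ici _) hcont.continuousOn
    intro ξ hξ
    rw [interior_Ici] at hξ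
    have h4 : lam₄ < ξ := hξ
    have h3 : lam₃ < ξ := lt_trans h34 h4
    have h2 : lam₂ < ξ := lt_trans h23 h3
    have h1 : lam₁ < ξ := lt_trans h12 h2
    have p := mul_pos (mul_pos (mul_pos (sub_pos.2 h1) (sub_pos.2 h2)) (sub_pos.2 h3))
      (sub_pos.2 h4)
    rw [hcrit]
    nlinarith [mul_pos hx5 p]
  -- sign facts
  have hP2 : P₅ lam₂ < 0 := by
    have := anti12 ⟨le_refl _, h12.le⟩ ⟨h12.le, le_refl _⟩ h12
    linarith [hval₁]
  have hP3 : 0 < P₅ lam₃ := by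
    have := anti34 ⟨le_refl _, h34.le⟩ ⟨h34.le, le_refl _⟩ h34
    linarith [hval₄]
  obtain ⟨ls, hls, hPls⟩ := intermediate_value_Ioo h23.le hcont.continuousOn
    (show (0:ℝ) ∈ Set.Ioo (P₅ lam₂) (P₅ lam₃) from ⟨hP2, hP3⟩)
  have hls2 : lam₂ < ls := hls.1
  have hls3 : ls < lam₃ := hls.2
  have hlspos : 0 < ls := lt_trans (lt_trans hpos h12) hls2
  have hl4pos : 0 < lam₄ := lt_trans (lt_trans hpos h12) (lt_trans h23 h34)
  -- root characterization
  have hroot : ∀ ξ : ℝ, P₅ ξ = 0 → ξ = lam₁ ∨ ξ = ls ∨ ξ = lam₄ := by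
    intro ξ hξ
    rcases lt_trichotomy ξ lam₁ with h | h | h
    · exfalso
      have := mono1 (Set.mem_Iic.2 h.le) (Set.mem_Iic.2 le_rfl) h
      linarith [hval₁]
    · exact Or.inl h
    rcases le_or_gt ξ lam₂ with h2 | h2
    · exfalso
      have := anti12 ⟨le_refl _, h12.le⟩ ⟨h.le, h2⟩ h
      linarith [hval₁]
    rcases lt_trichotomy ξ lam₃ with h3 | h3 | h3
    · refine Or.inr (Or.inl ?_)
      exact mono23.injOn ⟨h2.le, h3.le⟩ ⟨hls2.le, hls3.le⟩ (by rw [hξ, hPls])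
    · exfalso; rw [h3] at hξ; linarith
    rcases lt_trichotomy ξ lam₄ with h4 | h4 | h4
    · exfalso
      have := anti34 ⟨h3.le, h4.le⟩ ⟨h34.le, le_refl _⟩ h4
      linarith [hval₄]
    · exact Or.inr (Or.inr h4)
    · exfalso
      have := mono4 (Set.mem_Ici.2 le_rfl) (Set.mem_Ici.2 h4.le) h4
      linarith [hval₄]
  -- the parametrization of fixed points
  set F : ℝ → ℝ × ℝ := fun η =>
    ((a₀ + 4*a₁*η + 6*a₂*η^2 + 4*a₃*η^3 + a₄*η^4) ^ (-(1/3) : ℝ),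
     η * (a₀ + 4*a₁*η + 6*a₂*η^2 + 4*a₃*η^3 + a₄*η^4) ^ (-(1/3) : ℝ)) with hFdef
  have hApos : ∀ η : ℝ, 0 < η → 0 < a₀ + 4*a₁*η + 6*a₂*η^2 + 4*a₃*η^3 + a₄*η^4 := by
    intro η hη; positivity
  have hcube : ∀ η : ℝ, 0 < η →
      ((a₀ + 4*a₁*η + 6*a₂*η^2 + 4*a₃*η^3 + a₄*η^4) ^ (-(1/3) : ℝ)) ^ 3
        * (a₀ + 4*a₁*η + 6*a₂*η^2 + 4*a₃*η^3 + a₄*η^4) = 1 := by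
    intro η hη
    have h := hApos η hη
    have e : ((a₀ + 4*a₁*η + 6*a₂*η^2 + 4*a₃*η^3 + a₄*η^4) ^ (-(1/3) : ℝ)) ^ 3
        = (a₀ + 4*a₁*η + 6*a₂*η^2 + 4*a₃*η^3 + a₄*η^4)⁻¹ := by
      rw [← Real.rpow_natCast ((a₀ + 4*a₁*η + 6*a₂*η^2 + 4*a₃*η^3 + a₄*η^4) ^ (-(1/3):ℝ)) 3,
        ← Real.rpow_mul h.le]
      norm_num
      exact Real.rpow_neg_one _
    rw [e]
    exact inv_mul_cancel₀ h.ne'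
  have hFmem : ∀ η : ℝ, 0 < η → P₅ η = 0 →
      F η ∈ {p : ℝ × ℝ | 0 < p.1 ∧ 0 < p.2 ∧ Q p = p} := by
    intro η hη hPη
    have hA := hApos η hη
    have hcpos : 0 < (a₀ + 4*a₁*η + 6*a₂*η^2 + 4*a₃*η^3 + a₄*η^4) ^ (-(1/3) : ℝ) :=
      Real.rpow_pos_of_pos hA _
    have hx3 := hcube η hη
    have hPe : a₄ * η ^ 5 + (4 * a₃ - b₄) * η ^ 4 + (6 * a₂ - 4 * b₃) * η ^ 3
        + (4 * a₁ - 6 * b₂) * η ^ 2 + (a₀ - 4 * b₁) * η - b₀ = 0 := by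
      rw [← hP₅ η]; exact hPη
    refine ⟨hcpos, mul_pos hη hcpos, ?_⟩
    simp only [hFdef]
    rw [hQ, Prod.mk.injEq]
    set c := (a₀ + 4*a₁*η + 6*a₂*η^2 + 4*a₃*η^3 + a₄*η^4) ^ (-(1/3) : ℝ) with hc
    constructor
    · linear_combination c * hx3
    · linear_combination (-(c^4)) * hPe + (η * c) * hx3
  -- the set equality
  have hSeq : {p : ℝ × ℝ | 0 < p.1 ∧ 0 < p.2 ∧ Q p = p} = {F lam₁, F ls, F lam₄} := by
    ext p
    simp only [Set.mem_insert_iff, Set.mem_singleton_iff, Set.mem_setOf_eq]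
    constructor
    · intro hp
      obtain ⟨x, y⟩ := p
      obtain ⟨hx, hy, hfix⟩ := hp
      simp only at hx hy
      rw [hQ, Prod.mk.injEq] at hfix
      obtain ⟨h1, h2⟩ := hfix
      have hx0 : x ≠ 0 := hx.ne'
      set η := y / x with hηdef
      have hηpos : 0 < η := div_pos hy hx
      have hyx : y = η * x := by rw [hηdef]; field_simp
      rw [hyx] at h1 h2
      have hx3 : x ^ 3 * (a₀ + 4*a₁*η + 6*a₂*η^2 + 4*a₃*η^3 + a₄*η^4) = 1 := by
        have e1 : x * (x ^ 3 * (a₀ + 4*a₁*η + 6*a₂*η^2 + 4*a₃*η^3 + a₄*η^4) - 1) = 0 := by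
          linear_combination h1
        rcases mul_eq_zero.1 e1 with h | h
        · exact absurd h hx0
        · linarith [sub_eq_zero.1 h]
      have hProot : P₅ η = 0 := by
        have e2 : x ^ 5 * P₅ η = 0 := by
          rw [hP₅]
          linear_combination (η * x) * h1 - x * h2
        exact (mul_eq_zero.1 e2).resolve_left (pow_ne_zero 5 hx0)
      have hA := hApos η hηpos
      have hxval : x = (a₀ + 4*a₁*η + 6*a₂*η^2 + 4*a₃*η^3 + a₄*η^4) ^ (-(1/3) : ℝ) := by
        have c1 : x ^ 3
            = ((a₀ + 4*a₁*η + 6*a₂*η^2 + 4*a₃*η^3 + a₄*η^4) ^ (-(1/3) : ℝ)) ^ 3 :=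
          mul_right_cancel₀ hA.ne' (by rw [hx3, hcube η hηpos])
        have cube_inj : Function.Injective (fun t : ℝ => t ^ 3) :=
          (Odd.strictMono_pow (by decide : Odd 3)).injective
        exact cube_inj c1
      have hpF : (x, y) = F η := by
        simp only [hFdef]
        rw [hyx, ← hxval]
      rcases hroot η hProot with h | h | h
      · exact Or.inl (by rw [hpF, h])
      · exact Or.inr (Or.inl (by rw [hpF, h]))
      · exact Or.inr (Or.inr (by rw [hpF, h]))
    · rintro (rfl | rfl | rfl)
      · exact hFmem lam₁ hpos hval₁
      · exact hFmem ls hlspos hPls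
      · exact hFmem lam₄ hl4pos hval₄
  rw [hSeq]
  -- distinctness
  have hFinj : ∀ η₁ η₂ : ℝ, 0 < η₁ → 0 < η₂ → F η₁ = F η₂ → η₁ = η₂ := by
    intro η₁ η₂ hη₁ hη₂ h
    simp only [hFdef, Prod.mk.injEq] at h
    obtain ⟨hc, hm⟩ := h
    have hcpos : 0 < (a₀ + 4*a₁*η₁ + 6*a₂*η₁^2 + 4*a₃*η₁^3 + a₄*η₁^4) ^ (-(1/3) : ℝ) :=
      Real.rpow_pos_of_pos (hApos η₁ hη₁) _
    rw [← hc] at hm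
    exact mul_right_cancel₀ hcpos.ne' hm
  have hne12 : F lam₁ ≠ F ls := fun h =>
    absurd (hFinj _ _ hpos hlspos h) (ne_of_lt (lt_trans h12 hls2))
  have hne14 : F lam₁ ≠ F lam₄ := fun h =>
    absurd (hFinj _ _ hpos hl4pos h) (ne_of_lt (lt_trans h12 (lt_trans h23 h34)))
  have hne24 : F ls ≠ F lam₄ := fun h =>
    absurd (hFinj _ _ hlspos hl4pos h) (ne_of_lt (lt_trans hls3 h34))
  rw [Set.encard_insert_of_notMem (by simp [hne12, hne14]), Set.encard_pair hne24]
  rfl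
end

section
/- Suppose the four critical points λ₁<λ₂<λ₃<λ₄ of P₅ are all positive, i.e. λ₁ > 0, and that P₅(λ₁) > 0, P₅(λ₂) < 0, P₅(λ₃) > 0 and P₅(λ₄) < 0. Then the quartic operator Q has exactly five positive fixed points: the set {(x,y) ∈ ℝ² : x>0, y>0, Q(x,y)=(x,y)} has cardinality exactly 5. -/
set_option maxHeartbeats 2000000 in
theorem stmt_17 (a₀ a₁ a₂ a₃ a₄ b₀ b₁ b₂ b₃ b₄ : ℝ)
    (ha₀ : 0 < a₀) (ha₁ : 0 < a₁) (ha₂ : 0 < a₂) (ha₃ : 0 < a₃) (ha₄ : 0 < a₄)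
    (hb₀ : 0 < b₀) (hb₁ : 0 < b₁) (hb₂ : 0 < b₂) (hb₃ : 0 < b₃) (hb₄ : 0 < b₄)
    (Q : ℝ × ℝ → ℝ × ℝ)
    (hQ : ∀ x y : ℝ, Q (x, y) =
      (a₀ * x ^ 4 + 4 * a₁ * x ^ 3 * y + 6 * a₂ * x ^ 2 * y ^ 2 + 4 * a₃ * x * y ^ 3 + a₄ * y ^ 4,
       b₀ * x ^ 4 + 4 * b₁ * x ^ 3 * y + 6 * b₂ * x ^ 2 * y ^ 2 + 4 * b₃ * x * y ^ 3 + b₄ * y ^ 4))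
    (P₅ : ℝ → ℝ)
    (hP₅ : ∀ ξ : ℝ, P₅ ξ = a₄ * ξ ^ 5 + (4 * a₃ - b₄) * ξ ^ 4 + (6 * a₂ - 4 * b₃) * ξ ^ 3
      + (4 * a₁ - 6 * b₂) * ξ ^ 2 + (a₀ - 4 * b₁) * ξ - b₀)
    (lam₁ lam₂ lam₃ lam₄ : ℝ) (h12 : lam₁ < lam₂) (h23 : lam₂ < lam₃) (h34 : lam₃ < lam₄)
    (hcrit : ∀ ξ : ℝ, deriv P₅ ξ = 5 * a₄ * (ξ - lam₁) * (ξ - lam₂) * (ξ - lam₃) * (ξ - lam₄))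
    (hpos : 0 < lam₁) (hval₁ : 0 < P₅ lam₁) (hval₂ : P₅ lam₂ < 0) (hval₃ : 0 < P₅ lam₃) (hval₄ : P₅ lam₄ < 0) :
    ({p : ℝ × ℝ | 0 < p.1 ∧ 0 < p.2 ∧ Q p = p}).encard = 5 := by
  have hPfun : P₅ = fun ξ : ℝ => a₄ * ξ ^ 5 + (4 * a₃ - b₄) * ξ ^ 4 + (6 * a₂ - 4 * b₃) * ξ ^ 3
      + (4 * a₁ - 6 * b₂) * ξ ^ 2 + (a₀ - 4 * b₁) * ξ - b₀ := funext hP₅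
  have hdiff : Differentiable ℝ P₅ := by rw [hPfun]; fun_prop
  have hcont : Continuous P₅ := hdiff.continuous
  -- monotonicity on the five intervals
  have hmono0 : StrictMonoOn P₅ (Set.Icc 0 lam₁) := by
    apply strictMonoOn_of_deriv_pos (convex_Icc _ _) hcont.continuousOn
    intro x hx
    rw [interior_Icc, Set.mem_Ioo] at hx
    rw [hcrit]
    have h1 : x - lam₁ < 0 := by linarith [hx.2]
    have h2 : x - lam₂ < 0 := by linarith
    have h3 : x - lam₃ < 0 := by linarith
    have h4 : x - lam₄ < 0 := by linarith
    nlinarith [mul_pos ha₄ (mul_pos (mul_pos_of_neg_of_neg h1 h2) (mul_pos_of_neg_of_neg h3 h4))]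
  have hanti1 : StrictAntiOn P₅ (Set.Icc lam₁ lam₂) := by
    apply strictAntiOn_of_deriv_neg (convex_Icc _ _) hcont.continuousOn
    intro x hx
    rw [interior_Icc, Set.mem_Ioo] at hx
    rw [hcrit]
    have h1 : 0 < x - lam₁ := by linarith [hx.1]
    have h2 : x - lam₂ < 0 := by linarith [hx.2]
    have h3 : x - lam₃ < 0 := by linarith
    have h4 : x - lam₄ < 0 := by linarith
    nlinarith [mul_neg_of_pos_of_neg (mul_pos ha₄ (mul_pos h1 (mul_pos_of_neg_of_neg h3 h4))) h2]
  have hmono2 : StrictMonoOn P₅ (Set.Icc lam₂ lam₃) := by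
    apply strictMonoOn_of_deriv_pos (convex_Icc _ _) hcont.continuousOn
    intro x hx
    rw [interior_Icc, Set.mem_Ioo] at hx
    rw [hcrit]
    have h1 : 0 < x - lam₁ := by linarith [hx.1]
    have h2 : 0 < x - lam₂ := by linarith [hx.1]
    have h3 : x - lam₃ < 0 := by linarith [hx.2]
    have h4 : x - lam₄ < 0 := by linarith
    nlinarith [mul_pos (mul_pos ha₄ (mul_pos h1 h2)) (mul_pos_of_neg_of_neg h3 h4)]
  have hanti3 : StrictAntiOn P₅ (Set.Icc lam₃ lam₄) := by
    apply strictAntiOn_of_deriv_neg (convex_Icc _ _) hcont.continuousOn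
    intro x hx
    rw [interior_Icc, Set.mem_Ioo] at hx
    rw [hcrit]
    have h1 : 0 < x - lam₁ := by linarith [hx.1]
    have h2 : 0 < x - lam₂ := by linarith [hx.1]
    have h3 : 0 < x - lam₃ := by linarith [hx.1]
    have h4 : x - lam₄ < 0 := by linarith [hx.2]
    nlinarith [mul_neg_of_pos_of_neg (mul_pos (mul_pos ha₄ (mul_pos h1 h2)) h3) h4]
  have hmono4 : StrictMonoOn P₅ (Set.Ici lam₄) := by
    apply strictMonoOn_of_deriv_pos (convex_Ici _) hcont.continuousOn
    intro x hx
    rw [interior_Ici, Set.mem_Ioi] at hx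
    rw [hcrit]
    have h1 : 0 < x - lam₁ := by linarith
    have h2 : 0 < x - lam₂ := by linarith
    have h3 : 0 < x - lam₃ := by linarith
    have h4 : 0 < x - lam₄ := by linarith
    nlinarith [mul_pos (mul_pos (mul_pos ha₄ (mul_pos h1 h2)) h3) h4]
  have hP0 : P₅ 0 < 0 := by rw [hP₅]; simpa using hb₀
  -- a large point where P₅ is positive
  obtain ⟨M, hM0, hMgt⟩ : ∃ M : ℝ, 0 < P₅ M ∧ lam₄ < M := by
    set p : Polynomial ℝ := Polynomial.C a₄ * Polynomial.X ^ 5 + Polynomial.C (4 * a₃ - b₄) * Polynomial.X ^ 4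
      + Polynomial.C (6 * a₂ - 4 * b₃) * Polynomial.X ^ 3 + Polynomial.C (4 * a₁ - 6 * b₂) * Polynomial.X ^ 2
      + Polynomial.C (a₀ - 4 * b₁) * Polynomial.X - Polynomial.C b₀ with hp
    have hnd : p.natDegree = 5 := by
      rw [hp]; compute_degree!
      exact ha₄.ne'
    have hdeg : 0 < p.degree := by
      rw [Polynomial.degree_eq_natDegree (fun h => by simp [h] at hnd), hnd]; norm_num
    have hlc : p.leadingCoeff = a₄ := by
      rw [Polynomial.leadingCoeff, hnd, hp]
      simp only [Polynomial.coeff_sub, Polynomial.coeff_add, Polynomial.coeff_C_mul,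
        Polynomial.coeff_X_pow, Polynomial.coeff_X, Polynomial.coeff_C]
      norm_num
    have htt : Filter.Tendsto (fun x => Polynomial.eval x p) Filter.atTop Filter.atTop :=
      Polynomial.tendsto_atTop_of_leadingCoeff_nonneg p hdeg (hlc ▸ ha₄.le)
    have heval : ∀ x, Polynomial.eval x p = P₅ x := by
      intro x
      rw [hP₅, hp]
      simp only [Polynomial.eval_sub, Polynomial.eval_add, Polynomial.eval_mul,
        Polynomial.eval_pow, Polynomial.eval_C, Polynomial.eval_X]
    obtain ⟨M, h1, h2⟩ := ((htt.eventually_gt_atTop 0).and (Filter.eventually_gt_atTop lam₄)).exists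
    exact ⟨M, heval M ▸ h1, h2⟩
  -- the five roots
  obtain ⟨r₁, hr₁m, hr₁⟩ : ∃ r ∈ Set.Ioo (0:ℝ) lam₁, P₅ r = 0 := by
    obtain ⟨r, hm, hr⟩ := intermediate_value_Ioo hpos.le hcont.continuousOn ⟨hP0, hval₁⟩
    exact ⟨r, hm, hr⟩
  obtain ⟨r₂, hr₂m, hr₂⟩ : ∃ r ∈ Set.Ioo lam₁ lam₂, P₅ r = 0 := by
    obtain ⟨r, hm, hr⟩ := intermediate_value_Ioo' h12.le hcont.continuousOn ⟨hval₂, hval₁⟩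
    exact ⟨r, hm, hr⟩
  obtain ⟨r₃, hr₃m, hr₃⟩ : ∃ r ∈ Set.Ioo lam₂ lam₃, P₅ r = 0 := by
    obtain ⟨r, hm, hr⟩ := intermediate_value_Ioo h23.le hcont.continuousOn ⟨hval₂, hval₃⟩
    exact ⟨r, hm, hr⟩
  obtain ⟨r₄, hr₄m, hr₄⟩ : ∃ r ∈ Set.Ioo lam₃ lam₄, P₅ r = 0 := by
    obtain ⟨r, hm, hr⟩ := intermediate_value_Ioo' h34.le hcont.continuousOn ⟨hval₄, hval₃⟩
    exact ⟨r, hm, hr⟩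
  obtain ⟨r₅, hr₅m, hr₅⟩ : ∃ r ∈ Set.Ioo lam₄ M, P₅ r = 0 := by
    obtain ⟨r, hm, hr⟩ := intermediate_value_Ioo hMgt.le hcont.continuousOn ⟨hval₄, hM0⟩
    exact ⟨r, hm, hr⟩
  -- the root set
  have hS : {ξ : ℝ | 0 < ξ ∧ P₅ ξ = 0} = {r₁, r₂, r₃, r₄, r₅} := by
    ext ξ
    simp only [Set.mem_setOf_eq, Set.mem_insert_iff, Set.mem_singleton_iff]
    constructor
    · rintro ⟨hξ, hroot⟩
      rcases le_or_gt ξ lam₁ with h | h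
      · exact Or.inl (hmono0.injOn ⟨hξ.le, h⟩ ⟨hr₁m.1.le, hr₁m.2.le⟩ (hroot.trans hr₁.symm))
      rcases le_or_gt ξ lam₂ with h' | h'
      · exact Or.inr (Or.inl (hanti1.injOn ⟨h.le, h'⟩ ⟨hr₂m.1.le, hr₂m.2.le⟩ (hroot.trans hr₂.symm)))
      rcases le_or_gt ξ lam₃ with h'' | h''
      · exact Or.inr (Or.inr (Or.inl (hmono2.injOn ⟨h'.le, h''⟩ ⟨hr₃m.1.le, hr₃m.2.le⟩
          (hroot.trans hr₃.symm))))
      rcases le_or_gt ξ lam₄ with h''' | h'''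
      · exact Or.inr (Or.inr (Or.inr (Or.inl (hanti3.injOn ⟨h''.le, h'''⟩ ⟨hr₄m.1.le, hr₄m.2.le⟩
          (hroot.trans hr₄.symm)))))
      · exact Or.inr (Or.inr (Or.inr (Or.inr (hmono4.injOn h'''.le hr₅m.1.le
          (hroot.trans hr₅.symm)))))
    · rintro (rfl | rfl | rfl | rfl | rfl)
      · exact ⟨hr₁m.1, hr₁⟩
      · exact ⟨by linarith [hr₂m.1], hr₂⟩
      · exact ⟨by linarith [hr₃m.1], hr₃⟩
      · exact ⟨by linarith [hr₄m.1], hr₄⟩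
      · exact ⟨by linarith [hr₅m.1], hr₅⟩
  have o12 : r₁ < r₂ := by linarith [hr₁m.2, hr₂m.1]
  have o23 : r₂ < r₃ := by linarith [hr₂m.2, hr₃m.1]
  have o34 : r₃ < r₄ := by linarith [hr₃m.2, hr₄m.1]
  have o45 : r₄ < r₅ := by linarith [hr₄m.2, hr₅m.1]
  -- positivity of φ
  have hφpos : ∀ ξ : ℝ, 0 < ξ → 0 < a₀ + 4*a₁*ξ + 6*a₂*ξ^2 + 4*a₃*ξ^3 + a₄*ξ^4 := by
    intro ξ hξ; positivity
  have hcube : ∀ c : ℝ, 0 < c → (c ^ (-(1/3) : ℝ)) ^ (3 : ℕ) * c = 1 := by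
    intro c hc
    rw [← Real.rpow_natCast (c ^ (-(1/3) : ℝ)) 3, ← Real.rpow_mul hc.le]
    norm_num
    rw [Real.rpow_neg_one]
    exact inv_mul_cancel₀ hc.ne'
  have hFS : {p : ℝ × ℝ | 0 < p.1 ∧ 0 < p.2 ∧ Q p = p} =
      (fun ξ : ℝ => ((a₀ + 4*a₁*ξ + 6*a₂*ξ^2 + 4*a₃*ξ^3 + a₄*ξ^4) ^ (-(1/3) : ℝ),
        ξ * (a₀ + 4*a₁*ξ + 6*a₂*ξ^2 + 4*a₃*ξ^3 + a₄*ξ^4) ^ (-(1/3) : ℝ)))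
        '' {ξ : ℝ | 0 < ξ ∧ P₅ ξ = 0} := by
    ext ⟨x, y⟩
    simp only [Set.mem_setOf_eq, Set.mem_image, Prod.mk.injEq]
    constructor
    · rintro ⟨hx, hy, hfix⟩
      rw [hQ x y, Prod.mk.injEq] at hfix
      obtain ⟨e1, e2⟩ := hfix
      have hx' : x ≠ 0 := hx.ne'
      have hξ : 0 < y / x := div_pos hy hx
      have hroot : P₅ (y / x) = 0 := by
        have hpoly : a₄ * y ^ 5 + (4 * a₃ - b₄) * y ^ 4 * x + (6 * a₂ - 4 * b₃) * y ^ 3 * x ^ 2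
            + (4 * a₁ - 6 * b₂) * y ^ 2 * x ^ 3 + (a₀ - 4 * b₁) * y * x ^ 4 - b₀ * x ^ 5 = 0 := by
          linear_combination y * e1 - x * e2
        have h5 : P₅ (y / x) = (a₄ * y ^ 5 + (4 * a₃ - b₄) * y ^ 4 * x
            + (6 * a₂ - 4 * b₃) * y ^ 3 * x ^ 2 + (4 * a₁ - 6 * b₂) * y ^ 2 * x ^ 3
            + (a₀ - 4 * b₁) * y * x ^ 4 - b₀ * x ^ 5) / x ^ 5 := by
          rw [hP₅]; field_simp
        rw [h5, hpoly, zero_div]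
      have hphi : a₀ + 4*a₁*(y/x) + 6*a₂*(y/x)^2 + 4*a₃*(y/x)^3 + a₄*(y/x)^4 = (x ^ (3:ℕ))⁻¹ := by
        have h1 : a₀ + 4*a₁*(y/x) + 6*a₂*(y/x)^2 + 4*a₃*(y/x)^3 + a₄*(y/x)^4
            = (a₀ * x ^ 4 + 4 * a₁ * x ^ 3 * y + 6 * a₂ * x ^ 2 * y ^ 2 + 4 * a₃ * x * y ^ 3
              + a₄ * y ^ 4) / x ^ 4 := by
          field_simp
        rw [h1, e1]
        field_simp
      have hx1 : ((x ^ (3:ℕ))⁻¹ : ℝ) ^ (-(1/3) : ℝ) = x := by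
        rw [← Real.rpow_natCast x 3, ← Real.rpow_neg_one (x ^ ((3:ℕ):ℝ)), ← Real.rpow_mul hx.le,
          ← Real.rpow_mul hx.le]
        norm_num
      refine ⟨y / x, ⟨hξ, hroot⟩, ?_, ?_⟩
      · rw [hphi, hx1]
      · rw [hphi, hx1]; field_simp
    · rintro ⟨ξ, ⟨hξ, hroot⟩, heq1, heq2⟩
      have hcpos : 0 < a₀ + 4*a₁*ξ + 6*a₂*ξ^2 + 4*a₃*ξ^3 + a₄*ξ^4 := hφpos ξ hξ
      have htpos : 0 < (a₀ + 4*a₁*ξ + 6*a₂*ξ^2 + 4*a₃*ξ^3 + a₄*ξ^4) ^ (-(1/3) : ℝ) :=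
        Real.rpow_pos_of_pos hcpos _
      have h3 := hcube _ hcpos
      have hroot' : a₄ * ξ ^ 5 + (4 * a₃ - b₄) * ξ ^ 4 + (6 * a₂ - 4 * b₃) * ξ ^ 3
          + (4 * a₁ - 6 * b₂) * ξ ^ 2 + (a₀ - 4 * b₁) * ξ - b₀ = 0 := by
        rw [← hP₅]; exact hroot
      subst heq1 heq2
      refine ⟨htpos, by positivity, ?_⟩
      rw [hQ, Prod.mk.injEq]
      constructor
      · linear_combination (a₀ + 4*a₁*ξ + 6*a₂*ξ^2 + 4*a₃*ξ^3 + a₄*ξ^4) ^ (-(1/3) : ℝ) * h3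
      · linear_combination ξ * (a₀ + 4*a₁*ξ + 6*a₂*ξ^2 + 4*a₃*ξ^3 + a₄*ξ^4) ^ (-(1/3) : ℝ) * h3
          - ((a₀ + 4*a₁*ξ + 6*a₂*ξ^2 + 4*a₃*ξ^3 + a₄*ξ^4) ^ (-(1/3) : ℝ)) ^ 4 * hroot'
  have hinj : Set.InjOn (fun ξ : ℝ => ((a₀ + 4*a₁*ξ + 6*a₂*ξ^2 + 4*a₃*ξ^3 + a₄*ξ^4) ^ (-(1/3) : ℝ),
      ξ * (a₀ + 4*a₁*ξ + 6*a₂*ξ^2 + 4*a₃*ξ^3 + a₄*ξ^4) ^ (-(1/3) : ℝ)))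
      {ξ : ℝ | 0 < ξ ∧ P₅ ξ = 0} := by
    rintro ξ ⟨hξ, -⟩ ξ' ⟨hξ', -⟩ heq
    simp only [Prod.mk.injEq] at heq
    obtain ⟨e1, e2⟩ := heq
    have htpos : 0 < (a₀ + 4*a₁*ξ + 6*a₂*ξ^2 + 4*a₃*ξ^3 + a₄*ξ^4) ^ (-(1/3) : ℝ) :=
      Real.rpow_pos_of_pos (hφpos ξ hξ) _
    rw [← e1] at e2
    exact mul_right_cancel₀ htpos.ne' e2
  rw [hFS, hinj.encard_image, hS]
  rw [Set.encard_insert_of_notMem (by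
      simp only [Set.mem_insert_iff, Set.mem_singleton_iff]; push_neg
      exact ⟨by linarith, by linarith, by linarith, by linarith⟩),
    Set.encard_insert_of_notMem (by
      simp only [Set.mem_insert_iff, Set.mem_singleton_iff]; push_neg
      exact ⟨by linarith, by linarith, by linarith⟩),
    Set.encard_insert_of_notMem (by
      simp only [Set.mem_insert_iff, Set.mem_singleton_iff]; push_neg
      exact ⟨by linarith, by linarith⟩),
    Set.encard_pair (by intro h; rw [h] at o45; exact lt_irrefl _ o45)]
  norm_num
end

section
/- The map sending g to the function t ↦ (g(t)/g(0))^k is a bijection from the set of nontrivial positive fixed points of the Hammerstein operator H_k onto the set of nontrivial positive fixed points of the operator R_k; in particular, these two sets have the same cardinality. -/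
open MeasureTheory

lemma aux_intg {h : unitInterval → ℝ} (hc : Continuous h) : Integrable h :=
  hc.integrable_of_hasCompactSupport (HasCompactSupport.of_compactSpace h)

lemma aux_opm : (volume : Measure unitInterval).IsOpenPosMeasure := by
  constructor
  intro U hU hne
  obtain ⟨x, hx⟩ := hne
  obtain ⟨V, hV, rfl⟩ := isOpen_induced_iff.mp hU
  rw [unitInterval.volume_def,
    MeasurableEmbedding.comap_apply (MeasurableEmbedding.subtype_coe measurableSet_Icc),
    Subtype.image_preimage_coe]
  obtain ⟨ε, hε, hball⟩ := Metric.isOpen_iff.mp hV x hx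
  have hx0 : (0:ℝ) ≤ x := x.2.1
  have hx1 : (x:ℝ) ≤ 1 := x.2.2
  rcases lt_or_eq_of_le hx1 with hlt | heq
  · have hsub : Set.Ioo (x:ℝ) (min (x + ε) 1) ⊆ Set.Icc 0 1 ∩ V := by
      intro y hy
      refine ⟨⟨le_of_lt (lt_of_le_of_lt hx0 hy.1),
        le_of_lt (lt_of_lt_of_le hy.2 (min_le_right _ _))⟩, ?_⟩
      apply hball
      rw [Metric.mem_ball, Real.dist_eq, abs_of_pos (by linarith [hy.1])]
      have := lt_of_lt_of_le hy.2 (min_le_left _ _)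
      linarith
    refine fun h0 => ?_
    have := measure_mono_null hsub h0
    rw [Real.volume_Ioo] at this
    simp only [ENNReal.ofReal_eq_zero] at this
    have : (x:ℝ) < min (x + ε) 1 := lt_min (by linarith) hlt
    linarith
  · have hsub : Set.Ioo (max (1 - ε) 0) (x:ℝ) ⊆ Set.Icc 0 1 ∩ V := by
      intro y hy
      refine ⟨⟨le_of_lt (lt_of_le_of_lt (le_max_right _ _) hy.1),
        by rw [← heq]; linarith [hy.2]⟩, ?_⟩
      apply hball
      rw [Metric.mem_ball, Real.dist_eq, abs_of_nonpos (by linarith [hy.2])]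
      have := lt_of_le_of_lt (le_max_left _ _) hy.1
      rw [heq]; linarith
    refine fun h0 => ?_
    have := measure_mono_null hsub h0
    rw [Real.volume_Ioo] at this
    simp only [ENNReal.ofReal_eq_zero] at this
    have : max (1 - ε) 0 < (x:ℝ) := by
      rw [← heq]; exact max_lt (by linarith) (by rw [heq]; linarith)
    linarith

lemma aux_intpos {h : unitInterval → ℝ} (hc : Continuous h) (hn : ∀ t, 0 ≤ h t)
    {t0 : unitInterval} (h0 : h t0 ≠ 0) : 0 < ∫ u, h u := by
  haveI := aux_opm
  exact integral_pos_of_integrable_nonneg_nonzero hc (aux_intg hc) (fun t => hn t) h0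

lemma aux_contA {K : unitInterval → unitInterval → ℝ}
    (hKcont : Continuous fun p : unitInterval × unitInterval => K p.1 p.2)
    {f : unitInterval → ℝ} (hf : Continuous f) :
    Continuous fun t => ∫ u, K t u * f u := by
  obtain ⟨C, hC⟩ := isCompact_univ.exists_bound_of_continuousOn hKcont.continuousOn
  apply continuous_of_dominated (bound := fun u => C * ‖f u‖)
  · intro t
    exact ((hKcont.comp (continuous_const.prodMk continuous_id)).mul hf).aestronglyMeasurable
  · intro t
    filter_upwards with u
    rw [norm_mul]
    exact mul_le_mul_of_nonneg_right (hC (t, u) trivial) (norm_nonneg _)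
  · exact (hf.norm.integrable_of_hasCompactSupport
      (HasCompactSupport.of_compactSpace _)).const_mul C
  · filter_upwards with u
    exact (hKcont.comp (continuous_id.prodMk continuous_const)).mul continuous_const

theorem stmt_19 (K : unitInterval → unitInterval → ℝ)
    (hKcont : Continuous fun p : unitInterval × unitInterval => K p.1 p.2)
    (hKpos : ∀ t u : unitInterval, 0 < K t u)
    (k : ℕ) (hk : 2 ≤ k)
    (Rk Hk : (unitInterval → ℝ) → (unitInterval → ℝ))
    (hRk : ∀ (f : unitInterval → ℝ) (t : unitInterval),
      Rk f t = ((∫ u, K t u * f u) / (∫ u, K 0 u * f u)) ^ k)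
    (hHk : ∀ (f : unitInterval → ℝ) (t : unitInterval),
      Hk f t = ∫ u, K t u * (f u) ^ k) :
    Set.BijOn (fun (g : unitInterval → ℝ) (t : unitInterval) => (g t / g 0) ^ k)
      {g : unitInterval → ℝ | Continuous g ∧ (∀ t, 0 ≤ g t) ∧ g ≠ 0 ∧ Hk g = g}
      {f : unitInterval → ℝ | Continuous f ∧ (∀ t, 0 ≤ f t) ∧ f ≠ 0 ∧ Rk f = f} ∧
    ({g : unitInterval → ℝ | Continuous g ∧ (∀ t, 0 ≤ g t) ∧ g ≠ 0 ∧ Hk g = g}).encard =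
    ({f : unitInterval → ℝ | Continuous f ∧ (∀ t, 0 ≤ f t) ∧ f ≠ 0 ∧ Rk f = f}).encard := by
  have hk0 : k ≠ 0 := by omega
  -- positivity of g 0 for fixed points of Hk
  have hg0pos : ∀ g : unitInterval → ℝ, Continuous g → (∀ t, 0 ≤ g t) → g ≠ 0 → Hk g = g →
      ∀ t, 0 < g t := by
    intro g hgc hgn hgne hgfix t
    obtain ⟨t1, ht1⟩ := Function.ne_iff.mp hgne
    have hgt1 : 0 < g t1 := lt_of_le_of_ne (hgn t1) (by simpa using (Ne.symm ht1))
    have : g t = ∫ u, K t u * g u ^ k := by rw [← hHk g t, hgfix]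
    rw [this]
    refine aux_intpos ?_ ?_ (t0 := t1) ?_
    · exact (hKcont.comp (continuous_const.prodMk continuous_id)).mul (hgc.pow k)
    · exact fun u => mul_nonneg (hKpos t u).le (pow_nonneg (hgn u) k)
    · exact (mul_pos (hKpos t t1) (pow_pos hgt1 k)).ne'
  -- the key integral identity
  have hbij : Set.BijOn (fun (g : unitInterval → ℝ) (t : unitInterval) => (g t / g 0) ^ k)
      {g : unitInterval → ℝ | Continuous g ∧ (∀ t, 0 ≤ g t) ∧ g ≠ 0 ∧ Hk g = g}
      {f : unitInterval → ℝ | Continuous f ∧ (∀ t, 0 ≤ f t) ∧ f ≠ 0 ∧ Rk f = f} := by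
    refine ⟨?_, ?_, ?_⟩
    · -- MapsTo
      rintro g ⟨hgc, hgn, hgne, hgfix⟩
      have hg0 : 0 < g 0 := hg0pos g hgc hgn hgne hgfix 0
      have hA : ∀ t : unitInterval, (∫ u, K t u * (g u / g 0) ^ k) = (g 0 ^ k)⁻¹ * g t := by
        intro t
        have h1 : (∫ u, K t u * (g u / g 0) ^ k)
            = ∫ u, (g 0 ^ k)⁻¹ * (K t u * g u ^ k) := by
          apply integral_congr_ae
          filter_upwards with u
          rw [div_pow]; ring
        rw [h1, integral_const_mul, ← hHk g t, hgfix]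
      refine ⟨(hgc.div_const (g 0)).pow k, fun t => pow_nonneg (div_nonneg (hgn t) hg0.le) k,
        ?_, ?_⟩
      · intro h
        have := congrFun h 0
        simp only [div_self hg0.ne', one_pow, Pi.zero_apply] at this
        exact one_ne_zero this
      · funext t
        rw [hRk, hA t, hA 0, mul_div_mul_left _ _ (inv_ne_zero (pow_ne_zero k hg0.ne'))]
    · -- InjOn
      rintro g1 ⟨hg1c, hg1n, hg1ne, hg1fix⟩ g2 ⟨hg2c, hg2n, hg2ne, hg2fix⟩ heq
      have hg10 : 0 < g1 0 := hg0pos g1 hg1c hg1n hg1ne hg1fix 0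
      have hg20 : 0 < g2 0 := hg0pos g2 hg2c hg2n hg2ne hg2fix 0
      set c : ℝ := g1 0 / g2 0 with hc
      have hcpos : 0 < c := div_pos hg10 hg20
      have hratio : ∀ t, g1 t = c * g2 t := by
        intro t
        have h1 := congrFun heq t
        simp only at h1
        have h2 : g1 t / g1 0 = g2 t / g2 0 :=
          (pow_left_inj₀ (div_nonneg (hg1n t) hg10.le) (div_nonneg (hg2n t) hg20.le) hk0).mp h1
        field_simp [hc] at h2 ⊢
        have : g2 0 ≠ 0 := hg20.ne'
        rw [hc]; field_simp; linarith [h2]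
      obtain ⟨t1, ht1⟩ := Function.ne_iff.mp hg2ne
      have hg2t1 : 0 < g2 t1 := lt_of_le_of_ne (hg2n t1) (by simpa using (Ne.symm ht1))
      have hpow : g1 t1 = c ^ k * g2 t1 := by
        have h1 : g1 t1 = ∫ u, K t1 u * (c * g2 u) ^ k := by
          conv_lhs => rw [← hg1fix]
          rw [hHk]
          apply integral_congr_ae
          filter_upwards with u
          rw [hratio u]
        have h2 : (∫ u, K t1 u * (c * g2 u) ^ k) = ∫ u, c ^ k * (K t1 u * g2 u ^ k) := by
          apply integral_congr_ae
          filter_upwards with u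
          ring
        rw [h1, h2, integral_const_mul, ← hHk g2 t1, hg2fix]
      have hck : c = c ^ k := by
        have := hpow
        rw [hratio t1] at this
        have := mul_right_cancel₀ hg2t1.ne' this
        exact this
      have hc1 : c = 1 := by
        have hkm : c ^ (k - 1) = 1 ^ (k - 1) := by
          rw [one_pow]
          have hck' : c * c ^ (k - 1) = c * 1 := by
            rw [mul_one, ← pow_succ']
            have : k - 1 + 1 = k := by omega
            rw [this, ← hck]
          exact mul_left_cancel₀ hcpos.ne' hck'
        exact (pow_left_inj₀ hcpos.le zero_le_one (show k - 1 ≠ 0 by omega)).mp hkm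
      funext t
      rw [hratio t, hc1, one_mul]
    · -- SurjOn
      rintro f ⟨hfc, hfn, hfne, hffix⟩
      obtain ⟨t1, ht1⟩ := Function.ne_iff.mp hfne
      have hft1 : 0 < f t1 := lt_of_le_of_ne (hfn t1) (by simpa using (Ne.symm ht1))
      set A : unitInterval → ℝ := fun t => ∫ u, K t u * f u with hAdef
      have hApos : ∀ t, 0 < A t := by
        intro t
        refine aux_intpos ?_ ?_ (t0 := t1) ?_
        · exact (hKcont.comp (continuous_const.prodMk continuous_id)).mul hfc
        · exact fun u => mul_nonneg (hKpos t u).le (hfn u)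
        · exact (mul_pos (hKpos t t1) hft1).ne'
      have hB : 0 < A 0 := hApos 0
      have hfeq : ∀ t, f t = (A t / A 0) ^ k := by
        intro t
        conv_lhs => rw [← hffix]
        rw [hRk]
      set c : ℝ := (A 0) ^ (-(k : ℝ) / ((k : ℝ) - 1)) with hcdef
      have hcpos : 0 < c := Real.rpow_pos_of_pos hB _
      have hkR : (1 : ℝ) < (k : ℝ) := by exact_mod_cast (by omega : 1 < k)
      have hckm1 : c ^ (k - 1) = (A 0 ^ k)⁻¹ := by
        rw [hcdef, ← Real.rpow_natCast ((A 0) ^ (-(k : ℝ) / ((k : ℝ) - 1))) (k - 1),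
          ← Real.rpow_mul hB.le]
        have hcast : ((k - 1 : ℕ) : ℝ) = (k : ℝ) - 1 := by
          rw [Nat.cast_sub (by omega)]; norm_num
        rw [hcast, div_mul_cancel₀ _ (by linarith : (k : ℝ) - 1 ≠ 0),
          Real.rpow_neg hB.le, Real.rpow_natCast]
      have hkey : c ^ k * A 0 ^ k = c := by
        have h1 : c ^ k = c * c ^ (k - 1) := by
          rw [← pow_succ']
          congr 1
          omega
        rw [h1, hckm1, mul_assoc, inv_mul_cancel₀ (pow_ne_zero k hB.ne'), mul_one]
      refine ⟨fun t => c * A t, ⟨continuous_const.mul (aux_contA hKcont hfc),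
        fun t => mul_nonneg hcpos.le (hApos t).le, ?_, ?_⟩, ?_⟩
      · intro h
        have := congrFun h 0
        simp only [Pi.zero_apply] at this
        exact (mul_pos hcpos hB).ne' this
      · funext t
        rw [hHk]
        have h1 : (∫ u, K t u * (c * A u) ^ k)
            = ∫ u, (c ^ k * A 0 ^ k) * (K t u * f u) := by
          apply integral_congr_ae
          filter_upwards with u
          have hAu : A u ^ k = A 0 ^ k * f u := by
            rw [hfeq u, div_pow]
            field_simp
          rw [mul_pow, hAu]
          ring
        rw [h1, integral_const_mul, hkey]
      · funext t
        simp only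
        rw [mul_div_mul_left _ _ hcpos.ne', ← hfeq t]
  refine ⟨hbij, ?_⟩
  rw [← hbij.image_eq, (hbij.injOn).encard_image]
end
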